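/- arXiv:1806.08692 — 7 statements merged into one kernel-verified Lean document; each statement's English description precedes it below -/
import Mathlib

section
/- For all real x ≥ 1 and y ≥ 0, f(x+y) ≤ f(x) + 1.5·y, where f(x) = log₂(x)/(log₂(2+log₂ x))². -/
noncomputable def f (x : ℝ) : ℝ := Real.logb 2 x / (Real.logb 2 (2 + Real.logb 2 x)) ^ 2

theorem stmt_0 (x y : ℝ) (hx : 1 ≤ x) (hy : 0 ≤ y) :
    f (x + y) ≤ f x + 1.5 * y := by
  have hx0 : (0:ℝ) < x := by linarith
  have hxy : (1:ℝ) ≤ x + y := by linarith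
  set L := Real.logb 2 x with hLdef
  set L' := Real.logb 2 (x + y) with hL'def
  have hL : 0 ≤ L := Real.logb_nonneg one_lt_two hx
  have hLL' : L ≤ L' := Real.logb_le_logb_of_le (by norm_num) (by linarith) (by linarith)
  have hL' : 0 ≤ L' := le_trans hL hLL'
  set D := Real.logb 2 (2 + L) with hDdef
  set D' := Real.logb 2 (2 + L') with hD'def
  have hD : 1 ≤ D := by
    have : Real.logb 2 2 ≤ D := Real.logb_le_logb_of_le (by norm_num) (by linarith) (by linarith)
    simpa using this
  have hD' : D ≤ D' := Real.logb_le_logb_of_le (by norm_num) (by linarith) (by linarith)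
  have hD1 : 1 ≤ D' := le_trans hD hD'
  have hDsq : (1:ℝ) ≤ D ^ 2 := by nlinarith
  have hDsq' : D ^ 2 ≤ D' ^ 2 := by nlinarith
  have hDpos : (0:ℝ) < D ^ 2 := by linarith
  have step1 : f (x + y) ≤ L' / D ^ 2 := by
    unfold f
    exact div_le_div_of_nonneg_left hL' hDpos hDsq'
  have step2 : L' / D ^ 2 ≤ L / D ^ 2 + (L' - L) := by
    have h1 : (L' - L) / D ^ 2 ≤ (L' - L) := by
      rw [div_le_iff₀ hDpos]
      nlinarith
    have : L' / D ^ 2 = L / D ^ 2 + (L' - L) / D ^ 2 := by ring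
    linarith
  have step3 : L' - L ≤ 1.5 * y := by
    have hlog : L' - L = Real.log ((x + y) / x) / Real.log 2 := by
      rw [hL'def, hLdef, Real.logb, Real.logb, Real.log_div (by linarith) (ne_of_gt hx0)]
      ring
    have hlog2 : Real.log ((x + y) / x) ≤ y := by
      have h := Real.log_le_sub_one_of_pos (show (0:ℝ) < (x + y) / x by positivity)
      have : (x + y) / x - 1 ≤ y := by
        rw [div_sub_one (ne_of_gt hx0), div_le_iff₀ hx0]
        nlinarith
      linarith
    have hl2 : (2:ℝ)/3 ≤ Real.log 2 := by
      have := Real.log_two_gt_d9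
      linarith
    have hlogpos : (0:ℝ) < Real.log 2 := by linarith
    rw [hlog, div_le_iff₀ hlogpos]
    nlinarith
  have : f x = L / D ^ 2 := rfl
  linarith
end

section
/- For all real x, y ≥ 1, f(x·y) − f(x) ≤ f(y), where f(x) = log₂(x)/(log₂(2+log₂ x))². -/
theorem stmt_1 (x y : ℝ) (hx : 1 ≤ x) (hy : 1 ≤ y) :
    f (x * y) - f x ≤ f y := by
  have hx0 : (0:ℝ) < x := lt_of_lt_of_le one_pos hx
  have hy0 : (0:ℝ) < y := lt_of_lt_of_le one_pos hy
  have ha : 0 ≤ Real.logb 2 x := Real.logb_nonneg one_lt_two hx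
  have hb : 0 ≤ Real.logb 2 y := Real.logb_nonneg one_lt_two hy
  set a := Real.logb 2 x with ha'
  set b := Real.logb 2 y with hb'
  have hab : Real.logb 2 (x*y) = a + b := Real.logb_mul hx0.ne' hy0.ne'
  have hD : ∀ t : ℝ, 0 ≤ t → 1 ≤ Real.logb 2 (2+t) := by
    intro t ht
    rw [show (1:ℝ) = Real.logb 2 2 from (Real.logb_self_eq_one (by norm_num)).symm]
    exact Real.logb_le_logb_of_le (by norm_num) (by linarith) (by linarith)
  have h1 := hD a ha
  have h2 := hD b hb
  have h3 := hD (a+b) (by linarith)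
  have hma : Real.logb 2 (2+a) ≤ Real.logb 2 (2+(a+b)) :=
    Real.logb_le_logb_of_le (by norm_num) (by linarith) (by linarith)
  have hmb : Real.logb 2 (2+b) ≤ Real.logb 2 (2+(a+b)) :=
    Real.logb_le_logb_of_le (by norm_num) (by linarith) (by linarith)
  simp only [f, hab]
  rw [add_div]
  have e1 : a / (Real.logb 2 (2+(a+b)))^2 ≤ a / (Real.logb 2 (2+a))^2 := by
    gcongr
  have e2 : b / (Real.logb 2 (2+(a+b)))^2 ≤ b / (Real.logb 2 (2+b))^2 := by
    gcongr
  linarith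
end

section
/- For all real x > y ≥ 1 and c > 0, f(x+c) − f(y+c) ≤ f(x) − f(y), where f(x) = log₂(x)/(log₂(2+log₂ x))². Equivalently, z ↦ f(z+c) − f(z) is monotone decreasing on [1,∞). -/
open Set Real

-- ln w ≥ 2(w-1)/(w+1) for w ≥ 1, in cleared form
lemma log_lb {w : ℝ} (hw : 1 ≤ w) : 2*(w-1) ≤ Real.log w * (w+1) := by
  have key : ∀ u : ℝ, 1 ≤ u →
      HasDerivAt (fun v : ℝ => Real.log v - 2*(v-1)/(v+1)) ((u-1)^2/(u*(u+1)^2)) u := by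
    intro u hu
    have hu0 : (0:ℝ) < u := by linarith
    have hu1 : (0:ℝ) < u + 1 := by linarith
    have h1 : HasDerivAt (fun v : ℝ => 2*(v-1)) 2 u := by
      simpa using (((hasDerivAt_id u).sub_const 1).const_mul 2)
    have h2 : HasDerivAt (fun v : ℝ => v + 1) 1 u := (hasDerivAt_id u).add_const 1
    have h3 := h1.div h2 hu1.ne'
    have h4 := (Real.hasDerivAt_log hu0.ne').sub h3
    refine h4.congr_deriv ?_
    field_simp
    ring
  have hmono : MonotoneOn (fun v : ℝ => Real.log v - 2*(v-1)/(v+1)) (Ici 1) := by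
    apply monotoneOn_of_deriv_nonneg (convex_Ici 1)
    · exact fun u hu => ((key u hu).continuousAt).continuousWithinAt
    · intro u hu
      rw [interior_Ici] at hu
      exact ((key u (le_of_lt hu)).differentiableAt).differentiableWithinAt
    · intro u hu
      rw [interior_Ici, mem_Ioi] at hu
      rw [(key u (le_of_lt hu)).deriv]
      have hu0 : (0:ℝ) < u := by linarith
      exact div_nonneg (sq_nonneg _) (by positivity)
  have h0 := hmono (self_mem_Ici) (mem_Ici.mpr hw) hw
  simp [Real.log_one] at h0
  have hw1 : (0:ℝ) < w + 1 := by linarith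
  rw [div_le_iff₀ hw1] at h0
  linarith

-- for g₀ monotone: log s * s ≥ 2(s-2), s ≥ 2
lemma mono_key {s : ℝ} (hs : 2 ≤ s) : 2*(s-2) ≤ Real.log s * s := by
  have hw : (1:ℝ) ≤ s/2 := by linarith
  have h1 := log_lb hw
  have h2 : Real.log s = Real.log 2 + Real.log (s/2) := by
    rw [← Real.log_mul (by norm_num) (by positivity)]
    ring_nf
  have hl2 := Real.log_two_gt_d9
  have hA : 0 ≤ Real.log (s/2) := Real.log_nonneg hw
  nlinarith [sq_nonneg (s-2), mul_nonneg hA (by linarith : (0:ℝ) ≤ s - 2), h1, hl2, hs]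

-- for g₀ concave: log s * (s+2) ≥ 3(s-2), s ≥ 2
lemma conc_key {s : ℝ} (hs : 2 ≤ s) : 3*(s-2) ≤ Real.log s * (s+2) := by
  set w := Real.sqrt (s/2) with hwdef
  have hw1 : (1:ℝ) ≤ w := by
    rw [hwdef]
    rw [show (1:ℝ) = Real.sqrt 1 by simp]
    exact Real.sqrt_le_sqrt (by linarith)
  have hw2 : w^2 = s/2 := Real.sq_sqrt (by linarith)
  have hs2 : s = 2*w^2 := by rw [hw2]; ring
  have hA : 0 ≤ Real.log w := Real.log_nonneg hw1
  have h1 := log_lb hw1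
  have hlogs : Real.log s = Real.log 2 + 2 * Real.log w := by
    rw [hs2, Real.log_mul (by norm_num) (by positivity)]
    rw [show w^2 = w^(2:ℕ) from rfl, Real.log_pow]
    norm_num
  have hl2 := Real.log_two_gt_d9
  rw [hlogs, hs2]
  -- need: 3*(2w²-2) ≤ (log2 + 2 log w)(2w²+2)
  have h3 : 2*(w-1)*(2*w^2+2) ≤ Real.log w * (w+1) * (2*w^2+2) :=
    mul_le_mul_of_nonneg_right h1 (by positivity)
  nlinarith [h3, hl2, hA, hw1, sq_nonneg (w-1), sq_nonneg (w-2), sq_nonneg (w^2-2*w),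
    mul_nonneg (mul_nonneg (by linarith : (0:ℝ) ≤ w-1) (by linarith : (0:ℝ) ≤ w-1)) (by linarith : (0:ℝ) ≤ w-1),
    mul_nonneg hA (by linarith : (0:ℝ) ≤ w-1)]

lemma hasDeriv_g0 {t : ℝ} (ht : 0 ≤ t) :
    HasDerivAt (fun u : ℝ => u / (Real.log (2+u))^2)
      ((Real.log (2+t) - 2*t/(2+t)) / (Real.log (2+t))^3) t := by
  have hs : (0:ℝ) < 2 + t := by linarith
  have hL : 0 < Real.log (2+t) := Real.log_pos (by linarith)
  have h1 : HasDerivAt (fun u : ℝ => 2 + u) 1 t := (hasDerivAt_id t).const_add 2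
  have hlog : HasDerivAt (fun u : ℝ => Real.log (2+u)) (1/(2+t)) t := by
    simpa using h1.log hs.ne'
  have hpow := hlog.pow 2
  have hdiv := (hasDerivAt_id t).div hpow (pow_ne_zero _ hL.ne')
  refine hdiv.congr_deriv ?_
  simp only [Pi.pow_apply, Pi.sub_apply, id_eq, Nat.cast_ofNat]
  field_simp
  ring

lemma hasDeriv_d1 {t : ℝ} (ht : 0 ≤ t) :
    HasDerivAt (fun u : ℝ => (Real.log (2+u) - 2*u/(2+u)) / (Real.log (2+u))^3)
      ((6*t - 2*t*Real.log (2+t) - 8*Real.log (2+t)) / ((2+t)^2 * (Real.log (2+t))^4)) t := by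
  have hs : (0:ℝ) < 2 + t := by linarith
  have hL : 0 < Real.log (2+t) := Real.log_pos (by linarith)
  have h1 : HasDerivAt (fun u : ℝ => 2 + u) 1 t := (hasDerivAt_id t).const_add 2
  have hlog : HasDerivAt (fun u : ℝ => Real.log (2+u)) (1/(2+t)) t := by
    simpa using h1.log hs.ne'
  have hfrac : HasDerivAt (fun u : ℝ => 2*u/(2+u)) ((2*1*(2+t) - 2*t*1)/(2+t)^2) t := by
    simpa [Pi.div_def] using ((hasDerivAt_id t).const_mul 2).div h1 hs.ne'
  have hnum := hlog.sub hfrac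
  have hden := hlog.pow 3
  have hdiv := hnum.div hden (pow_ne_zero _ hL.ne')
  refine hdiv.congr_deriv ?_
  simp only [Pi.pow_apply, Pi.sub_apply, id_eq, Nat.cast_ofNat]
  field_simp
  ring

lemma g0_contOn : ContinuousOn (fun u : ℝ => u / (Real.log (2+u))^2) (Ici 0) :=
  fun t ht => ((hasDeriv_g0 ht).continuousAt).continuousWithinAt

lemma g0_concave : ConcaveOn ℝ (Ici 0) (fun u : ℝ => u / (Real.log (2+u))^2) := by
  apply concaveOn_of_hasDerivWithinAt2_nonpos (convex_Ici 0) g0_contOn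
    (f' := fun t => (Real.log (2+t) - 2*t/(2+t)) / (Real.log (2+t))^3)
    (f'' := fun t => (6*t - 2*t*Real.log (2+t) - 8*Real.log (2+t)) / ((2+t)^2 * (Real.log (2+t))^4))
  · intro t ht
    rw [interior_Ici, mem_Ioi] at ht
    exact (hasDeriv_g0 ht.le).hasDerivWithinAt
  · intro t ht
    rw [interior_Ici, mem_Ioi] at ht
    exact (hasDeriv_d1 ht.le).hasDerivWithinAt
  · intro t ht
    rw [interior_Ici, mem_Ioi] at ht
    have hs : (0:ℝ) < 2 + t := by linarith
    have hL : 0 < Real.log (2+t) := Real.log_pos (by linarith)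
    have hk := conc_key (s := 2+t) (by linarith)
    apply div_nonpos_of_nonpos_of_nonneg
    · nlinarith [hk]
    · positivity

lemma g0_mono : MonotoneOn (fun u : ℝ => u / (Real.log (2+u))^2) (Ici 0) := by
  apply monotoneOn_of_deriv_nonneg (convex_Ici 0) g0_contOn
  · intro t ht
    rw [interior_Ici, mem_Ioi] at ht
    exact (hasDeriv_g0 ht.le).differentiableAt.differentiableWithinAt
  · intro t ht
    rw [interior_Ici, mem_Ioi] at ht
    have hs : (0:ℝ) < 2 + t := by linarith
    have hL : 0 < Real.log (2+t) := Real.log_pos (by linarith)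
    rw [(hasDeriv_g0 ht.le).deriv]
    have hk := mono_key (s := 2+t) (by linarith)
    apply div_nonneg _ (by positivity)
    rw [sub_nonneg, div_le_iff₀ hs]
    nlinarith [hk]

lemma f_eq {x : ℝ} (hx : 1 ≤ x) :
    f x = (Real.log 2)^2 * (Real.logb 2 x / (Real.log (2 + Real.logb 2 x))^2) := by
  have hu : 0 ≤ Real.logb 2 x := Real.logb_nonneg one_lt_two hx
  have hA : 0 < Real.log (2 + Real.logb 2 x) := Real.log_pos (by linarith)
  have hB : 0 < Real.log 2 := Real.log_pos one_lt_two
  have h : Real.logb 2 (2 + Real.logb 2 x) = Real.log (2 + Real.logb 2 x) / Real.log 2 :=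
    (Real.log_div_log).symm
  rw [f, h, div_pow, div_div_eq_mul_div]
  ring

lemma logb_concave : ConcaveOn ℝ (Ici 1) (Real.logb 2) := by
  have h := (strictConcaveOn_log_Ioi.concaveOn).subset
    (fun z hz => lt_of_lt_of_le zero_lt_one hz) (convex_Ici 1)
  have h2 := h.smul (c := (Real.log 2)⁻¹) (by positivity)
  refine h2.congr ?_
  intro z _
  simp [Real.logb, smul_eq_mul, div_eq_inv_mul]

lemma f_concave : ConcaveOn ℝ (Ici 1) f := by
  constructor
  · exact convex_Ici 1
  · intro a ha b hb p q hp hq hpq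
    have ha1 : (1:ℝ) ≤ a := ha
    have hb1 : (1:ℝ) ≤ b := hb
    have hmem : p • a + q • b ∈ Ici (1:ℝ) := (convex_Ici 1) ha hb hp hq hpq
    simp only [smul_eq_mul] at hmem ⊢
    have hua : 0 ≤ Real.logb 2 a := Real.logb_nonneg one_lt_two ha1
    have hub : 0 ≤ Real.logb 2 b := Real.logb_nonneg one_lt_two hb1
    have hstep1 : p * Real.logb 2 a + q * Real.logb 2 b ≤ Real.logb 2 (p*a+q*b) := by
      simpa using logb_concave.2 ha hb hp hq hpq
    have hcomb0 : 0 ≤ p * Real.logb 2 a + q * Real.logb 2 b :=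
      add_nonneg (mul_nonneg hp hua) (mul_nonneg hq hub)
    have hstep2 := g0_mono (mem_Ici.2 hcomb0) (mem_Ici.2 (hcomb0.trans hstep1)) hstep1
    have hstep3 := g0_concave.2 (mem_Ici.2 hua) (mem_Ici.2 hub) hp hq hpq
    simp only [smul_eq_mul] at hstep2 hstep3
    rw [f_eq ha1, f_eq hb1, f_eq hmem]
    have hB2 : (0:ℝ) ≤ (Real.log 2)^2 := sq_nonneg _
    nlinarith [mul_le_mul_of_nonneg_left (hstep3.trans hstep2) hB2]

theorem stmt_5 (x y c : ℝ) (hy : 1 ≤ y) (hxy : y < x) (hc : 0 < c) :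
    f (x + c) - f (y + c) ≤ f x - f y := by
  have hd : (0:ℝ) < x + c - y := by linarith
  set lam := (x - y) / (x + c - y) with hlam
  set mu := c / (x + c - y) with hmu
  have hlam0 : 0 ≤ lam := by
    rw [hlam]; exact div_nonneg (by linarith) (by linarith)
  have hmu0 : 0 ≤ mu := by
    rw [hmu]; exact div_nonneg (by linarith) (by linarith)
  have hsum : lam + mu = 1 := by rw [hlam, hmu]; field_simp; ring
  have hy1 : y ∈ Ici (1:ℝ) := mem_Ici.2 hy
  have hxc1 : x + c ∈ Ici (1:ℝ) := mem_Ici.2 (by linarith)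
  have h1 := f_concave.2 hy1 hxc1 hmu0 hlam0 (by linarith)
  have h2 := f_concave.2 hy1 hxc1 hlam0 hmu0 hsum
  simp only [smul_eq_mul] at h1 h2
  have e1 : mu * y + lam * (x + c) = x := by
    rw [hlam, hmu]; field_simp; ring
  have e2 : lam * y + mu * (x + c) = y + c := by
    rw [hlam, hmu]; field_simp; ring
  rw [e1] at h1
  rw [e2] at h2
  have e3 : mu * f y + lam * f y = f y := by
    rw [← add_mul]
    rw [show mu + lam = 1 by linarith, one_mul]
  have e4 : mu * f (x+c) + lam * f (x+c) = f (x+c) := by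
    rw [← add_mul]
    rw [show mu + lam = 1 by linarith, one_mul]
  linarith
end

section
/- Define h(x) = d·(log₂(2+x))² for a constant d ≥ 1, and h^(i) its i-fold iterate. Then for n ≥ 2, h^(i)(log₂ n) is decreasing in i until it reaches a constant, and the number of iterations needed for h^(i)(log₂ n) to drop below an absolute constant (depending on d) is at most log* n + O(1). -/
open Real


lemma quart_le_exp (u : ℝ) (hu : 0 ≤ u) : (u/4)^4 ≤ Real.exp u := by
  have h1 : u/4 + 1 ≤ Real.exp (u/4) := Real.add_one_le_exp _
  have h2 : (u/4)^4 ≤ (u/4 + 1)^4 := pow_le_pow_left₀ (by positivity) (by linarith) 4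
  have h3 : (u/4 + 1)^4 ≤ (Real.exp (u/4))^4 := pow_le_pow_left₀ (by positivity) h1 4
  have h4 : Real.exp u = (Real.exp (u/4))^4 := by
    rw [← Real.exp_nat_mul]; norm_num; ring
  linarith

lemma quad_le_exp (u : ℝ) (hu : 0 ≤ u) : 1 + u + u^2/4 ≤ Real.exp u := by
  have h1 : u/2 + 1 ≤ Real.exp (u/2) := Real.add_one_le_exp _
  have h3 : (u/2 + 1)^2 ≤ (Real.exp (u/2))^2 := pow_le_pow_left₀ (by positivity) h1 2
  have h4 : Real.exp u = (Real.exp (u/2))^2 := by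
    rw [← Real.exp_nat_mul]; norm_num; ring
  nlinarith

lemma h_dec {d : ℝ} (hd : 1 ≤ d) (x : ℝ) (hx : (2:ℝ)^(96*d) < x) :
    d * (Real.logb 2 (2+x))^2 < x := by
  have hl : (0.6931471803:ℝ) < Real.log 2 := Real.log_two_gt_d9
  have hl0 : (0:ℝ) < Real.log 2 := by linarith
  have hK2 : (2:ℝ) ≤ (2:ℝ)^(96*d) := by
    calc (2:ℝ) = (2:ℝ)^(1:ℝ) := (Real.rpow_one 2).symm
    _ ≤ (2:ℝ)^(96*d) := Real.rpow_le_rpow_of_exponent_le one_le_two (by linarith)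
  have hx2 : (2:ℝ) ≤ x := le_trans hK2 hx.le
  have hx0 : (0:ℝ) < x := by linarith
  set t := Real.logb 2 x with ht
  have htgt : 96*d < t := by
    have := Real.logb_lt_logb (b := 2) one_lt_two (Real.rpow_pos_of_pos two_pos _) hx
    rwa [Real.logb_rpow two_pos (by norm_num)] at this
  have ht0 : 0 < t := by linarith
  have hlb : Real.logb 2 (2+x) ≤ 2*t := by
    have h1 : (2:ℝ)+x ≤ x*x := by nlinarith
    have h2 : Real.logb 2 (2+x) ≤ Real.logb 2 (x*x) :=
      Real.logb_le_logb_of_le one_lt_two (by linarith) h1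
    rw [Real.logb_mul (by positivity) (by positivity), ← ht] at h2
    linarith
  have hlbnn : 0 ≤ Real.logb 2 (2+x) := Real.logb_nonneg one_lt_two (by linarith)
  have hsq : (Real.logb 2 (2+x))^2 ≤ 4*t^2 := by nlinarith
  have hxval : x = Real.exp (Real.log 2 * t) := by
    rw [← Real.rpow_def_of_pos two_pos, Real.rpow_logb two_pos (by norm_num) hx0]
  have hquart : (Real.log 2 * t / 4)^4 ≤ Real.exp (Real.log 2 * t) :=
    quart_le_exp _ (by positivity)
  have key : 4*d*t^2 < (Real.log 2 * t / 4)^4 := by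
    have e : (Real.log 2 * t / 4)^4 = (Real.log 2)^4 * (t^2)^2 / 256 := by ring
    have h1 : (0.23:ℝ) < (Real.log 2)^4 := by
      have := pow_lt_pow_left₀ hl (by norm_num : (0:ℝ) ≤ 0.6931471803) (by norm_num : 4 ≠ 0)
      nlinarith
    have ht2 : 9216*(d^2) < t^2 := by nlinarith
    have h4 : (0.23:ℝ) * (t^2)^2 ≤ (Real.log 2)^4 * (t^2)^2 := by nlinarith [sq_nonneg (t^2)]
    have h5 : 4*d*t^2 < 0.23 * (t^2)^2 / 256 := by nlinarith [sq_nonneg t, mul_pos ht0 ht0]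
    rw [e]; linarith
  nlinarith

lemma logb_step (x : ℝ) (hx : 2 ≤ x) : Real.logb 2 x ≤ x - 1/2 := by
  have hl : (0.6931471803:ℝ) < Real.log 2 := Real.log_two_gt_d9
  rw [Real.logb_le_iff_le_rpow one_lt_two (by linarith)]
  rw [Real.rpow_def_of_pos two_pos]
  have hu : 0 ≤ Real.log 2 * (x - 1/2) := by nlinarith
  have := quad_le_exp _ hu
  nlinarith [sq_nonneg (x-2), sq_nonneg (Real.log 2 - 0.6931471803), sq_nonneg (x - 16/9),
    mul_nonneg (le_of_lt (show (0:ℝ) < Real.log 2 - 0.69 by linarith)) (show (0:ℝ) ≤ x - 2 by linarith)]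


lemma logstar_aux (k : ℕ) : ∀ n : ℝ, 2 ≤ n → n ≤ 2 + k/2 →
    ∃ j : ℕ, (fun x => Real.logb 2 x)^[j] n ≤ 1 := by
  induction k with
  | zero =>
    intro n h1 h2
    have hn : n = 2 := by norm_num at h2; linarith
    exact ⟨1, by simp [hn, Real.logb_self_eq_one one_lt_two]⟩
  | succ k ih =>
    intro n h1 h2
    by_cases hc : n ≤ 2 + k/2
    · exact ih n h1 hc
    · push_neg at hc
      set n' := Real.logb 2 n with hn'
      have hstep : n' ≤ n - 1/2 := logb_step n h1
      have hub : n' ≤ 2 + k/2 := by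
        push_cast at h2 ⊢
        push_cast at hc
        linarith
      by_cases h2n' : 2 ≤ n'
      · obtain ⟨j, hj⟩ := ih n' h2n' hub
        exact ⟨j+1, by rwa [Function.iterate_succ_apply]⟩
      · push_neg at h2n'
        refine ⟨2, ?_⟩
        have h0n' : 0 < n' := by
          have : (1:ℝ) ≤ n' := by
            have := Real.logb_le_logb_of_le one_lt_two two_pos h1
            rwa [Real.logb_self_eq_one one_lt_two] at this
          linarith
        have : Real.logb 2 n' ≤ Real.logb 2 2 :=
          Real.logb_le_logb_of_le one_lt_two h0n' h2n'.le
        rw [Real.logb_self_eq_one one_lt_two] at this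
        show Real.logb 2 (Real.logb 2 n) ≤ 1
        exact this

lemma logstar_nonempty (n : ℝ) (hn : 2 ≤ n) :
    ∃ j : ℕ, (fun x => Real.logb 2 x)^[j] n ≤ 1 := by
  refine logstar_aux (Nat.ceil (2*n)) n hn ?_
  have := Nat.le_ceil (2*n)
  push_cast
  linarith

lemma f_iter_nonneg {d : ℝ} (hd : 1 ≤ d) (n : ℝ) (hn : 2 ≤ n) (i : ℕ) :
    0 ≤ (fun x => d * (Real.logb 2 (2 + x)) ^ 2)^[i] (Real.logb 2 n) := by
  cases i with
  | zero => exact Real.logb_nonneg one_lt_two (by linarith)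
  | succ j =>
    rw [Function.iterate_succ_apply']
    have hd0 : 0 < d := by linarith
    positivity

lemma f_mono {d : ℝ} (hd : 1 ≤ d) {a b : ℝ} (ha : 0 ≤ a) (hab : a ≤ b) :
    d * (Real.logb 2 (2 + a)) ^ 2 ≤ d * (Real.logb 2 (2 + b)) ^ 2 := by
  have h1 : 0 ≤ Real.logb 2 (2 + a) := Real.logb_nonneg one_lt_two (by linarith)
  have h2 : Real.logb 2 (2 + a) ≤ Real.logb 2 (2 + b) :=
    Real.logb_le_logb_of_le one_lt_two (by linarith) (by linarith)
  exact mul_le_mul_of_nonneg_left (pow_le_pow_left₀ h1 h2 2) (by linarith)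

lemma main_ind {d : ℝ} (hd : 1 ≤ d) (n : ℝ) (hn : 2 ≤ n) (m' : ℕ)
    (hmin : ∀ k, k < m' → 16*d ≤ (fun x => Real.logb 2 x)^[k] n) :
    ∀ i, i + 2 ≤ m' → (fun x => d * (Real.logb 2 (2 + x)) ^ 2)^[i] (Real.logb 2 n)
      ≤ ((fun x => Real.logb 2 x)^[i+1] n)^3 := by
  intro i
  induction i with
  | zero =>
    intro _
    have h1 : (1:ℝ) ≤ Real.logb 2 n := by
      have := Real.logb_le_logb_of_le one_lt_two two_pos hn
      rwa [Real.logb_self_eq_one one_lt_two] at this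
    have he : ((fun x : ℝ => Real.logb 2 x)^[0+1] n) = Real.logb 2 n := by simp
    rw [he]
    simp only [Function.iterate_zero_apply]
    nlinarith [mul_le_mul_of_nonneg_left h1 (show (0:ℝ) ≤ Real.logb 2 n by linarith),
      sq_nonneg (Real.logb 2 n - 1), sq_nonneg (Real.logb 2 n)]
  | succ i ih =>
    intro hle
    have hIH := ih (by omega)
    set y := (fun x => Real.logb 2 x)^[i+1] n with hy
    have hy16 : 16*d ≤ y := hmin (i+1) (by omega)
    have hy'16 : 16*d ≤ (fun x => Real.logb 2 x)^[i+2] n := hmin (i+2) (by omega)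
    have hy2 : (2:ℝ) ≤ y := by linarith
    have hy0 : (0:ℝ) < y := by linarith
    have hylog : (fun x => Real.logb 2 x)^[i+1+1] n = Real.logb 2 y := by
      rw [Function.iterate_succ_apply']
    set y' := Real.logb 2 y with hy'def
    have hy'16' : 16*d ≤ y' := by rw [← hylog]; exact hy'16
    have hy'1 : (1:ℝ) ≤ y' := by linarith
    rw [Function.iterate_succ_apply', hylog]
    have h0 : 0 ≤ (fun x => d * (Real.logb 2 (2 + x)) ^ 2)^[i] (Real.logb 2 n) :=
      f_iter_nonneg hd n hn i
    have step1 : (fun x => d * (Real.logb 2 (2 + x)) ^ 2)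
          ((fun x => d * (Real.logb 2 (2 + x)) ^ 2)^[i] (Real.logb 2 n))
        ≤ d * (Real.logb 2 (2 + y^3)) ^ 2 := f_mono hd h0 hIH
    have step2 : d * (Real.logb 2 (2 + y^3)) ^ 2 ≤ y'^3 := by
      have h8 : (2:ℝ)^3 ≤ y^3 := pow_le_pow_left₀ (by norm_num) hy2 3
      have hle2 : 2 + y^3 ≤ 2*y^3 := by norm_num at h8; linarith
      have hlog1 : Real.logb 2 (2 + y^3) ≤ Real.logb 2 (2*y^3) :=
        Real.logb_le_logb_of_le one_lt_two (by positivity) hle2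
      have hlog2 : Real.logb 2 (2*y^3) = 1 + 3*y' := by
        rw [Real.logb_mul (by norm_num) (by positivity), Real.logb_self_eq_one one_lt_two,
          Real.logb_pow]
        push_cast; ring
      have hnn : 0 ≤ Real.logb 2 (2 + y^3) := Real.logb_nonneg one_lt_two (by nlinarith)
      rw [hlog2] at hlog1
      have hd0 : (0:ℝ) ≤ d := by linarith
      have hA2 : (Real.logb 2 (2 + y^3))^2 ≤ (1+3*y')^2 := pow_le_pow_left₀ hnn hlog1 2
      have hh1 : d*(Real.logb 2 (2 + y^3))^2 ≤ d*(1+3*y')^2 :=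
        mul_le_mul_of_nonneg_left hA2 hd0
      have hh2 : (1+3*y')^2 ≤ 16*y'^2 := by nlinarith [sq_nonneg (y'-1)]
      have hh3 : d*(1+3*y')^2 ≤ d*(16*y'^2) := mul_le_mul_of_nonneg_left hh2 hd0
      have hh4 : d*(16*y'^2) ≤ y'^3 := by
        nlinarith [mul_nonneg (sq_nonneg y') (sub_nonneg.2 hy'16')]
      linarith
    exact le_trans step1 step2


theorem stmt_10 (d : ℝ) (hd : 1 ≤ d) :
    ∃ K : ℝ, ∃ c : ℕ, 0 < K ∧ ∀ n : ℝ, 2 ≤ n →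
      (∀ i : ℕ, K < (fun x => d * (Real.logb 2 (2 + x)) ^ 2)^[i] (Real.logb 2 n) →
        (fun x => d * (Real.logb 2 (2 + x)) ^ 2)^[i + 1] (Real.logb 2 n) <
          (fun x => d * (Real.logb 2 (2 + x)) ^ 2)^[i] (Real.logb 2 n)) ∧
      sInf {i : ℕ | (fun x => d * (Real.logb 2 (2 + x)) ^ 2)^[i] (Real.logb 2 n) ≤ K} ≤
        sInf {j : ℕ | (fun x => Real.logb 2 x)^[j] n ≤ 1} + c := by
  have hl : (0.6931471803:ℝ) < Real.log 2 := Real.log_two_gt_d9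
  have hKpos : (0:ℝ) < (2:ℝ)^(96*d) := Real.rpow_pos_of_pos two_pos _
  have h16K : 16*d ≤ (2:ℝ)^(96*d) := by
    rw [Real.rpow_def_of_pos two_pos]
    have := Real.add_one_le_exp (Real.log 2 * (96*d))
    nlinarith
  have h48K : (2:ℝ)^(48*d) ≤ (2:ℝ)^(96*d) :=
    Real.rpow_le_rpow_of_exponent_le one_le_two (by linarith)
  refine ⟨(2:ℝ)^(96*d), 0, hKpos, ?_⟩
  intro n hn
  constructor
  · -- decreasing while above K
    intro i hi
    rw [Function.iterate_succ_apply']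
    exact h_dec hd _ hi
  · -- bound on number of iterations
    obtain ⟨j0, hj0⟩ := logstar_nonempty n hn
    set m := sInf {j : ℕ | (fun x => Real.logb 2 x)^[j] n ≤ 1} with hm
    have hm_mem : (fun x => Real.logb 2 x)^[m] n ≤ 1 := by
      have : m ∈ {j : ℕ | (fun x => Real.logb 2 x)^[j] n ≤ 1} := Nat.sInf_mem ⟨j0, hj0⟩
      exact this
    have hmS' : m ∈ {j : ℕ | (fun x => Real.logb 2 x)^[j] n < 16*d} := by
      simp only [Set.mem_setOf_eq]; linarith
    set m' := sInf {j : ℕ | (fun x => Real.logb 2 x)^[j] n < 16*d} with hm'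
    have hm'le : m' ≤ m := Nat.sInf_le hmS'
    have hm'mem : (fun x => Real.logb 2 x)^[m'] n < 16*d := by
      have : m' ∈ {j : ℕ | (fun x => Real.logb 2 x)^[j] n < 16*d} := Nat.sInf_mem ⟨m, hmS'⟩
      exact this
    have hmin : ∀ k, k < m' → 16*d ≤ (fun x => Real.logb 2 x)^[k] n := by
      intro k hk
      have := Nat.notMem_of_lt_sInf (s := {j : ℕ | (fun x => Real.logb 2 x)^[j] n < 16*d})
        (by rw [← hm']; exact hk)
      simp only [Set.mem_setOf_eq, not_lt] at this
      exact this
    suffices hex : ∃ i, i ≤ m' ∧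
        (fun x => d * (Real.logb 2 (2 + x)) ^ 2)^[i] (Real.logb 2 n) ≤ (2:ℝ)^(96*d) by
      obtain ⟨i, hi, hiK⟩ := hex
      have h1 : sInf {i : ℕ | (fun x => d * (Real.logb 2 (2 + x)) ^ 2)^[i] (Real.logb 2 n)
          ≤ (2:ℝ)^(96*d)} ≤ i := Nat.sInf_le hiK
      omega
    rcases Nat.lt_or_ge m' 2 with hc | hc
    · -- m' ≤ 1 : already small at i = 0
      refine ⟨0, Nat.zero_le _, ?_⟩
      simp only [Function.iterate_zero_apply]
      have hlt : Real.logb 2 n < 16*d := by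
        have hc' : m' = 0 ∨ m' = 1 := by omega
        rcases hc' with h0 | h1
        · have : n < 16*d := by
            have := hm'mem; rw [h0] at this; simpa using this
          have := logb_step n hn
          linarith
        · have := hm'mem; rw [h1] at this
          simpa using this
      linarith
    · obtain ⟨k, hk⟩ : ∃ k, m' = k + 2 := ⟨m' - 2, by omega⟩
      have hmin2 : ∀ k', k' < k+2 → 16*d ≤ (fun x => Real.logb 2 x)^[k'] n := by
        intro k' h; exact hmin k' (by omega)
      rw [hk] at hm'mem
      have hP := main_ind hd n hn (k+2) hmin2 k le_rfl
      set y := (fun x => Real.logb 2 x)^[k+1] n with hy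
      have hy16 : 16*d ≤ y := hmin (k+1) (by omega)
      have hy0 : (0:ℝ) < y := by linarith
      have hylog : Real.logb 2 y = (fun x => Real.logb 2 x)^[k+2] n := by
        rw [Function.iterate_succ_apply']
      have hyK : y ≤ (2:ℝ)^(16*d) := by
        have h1 : Real.logb 2 y ≤ 16*d := by rw [hylog]; exact hm'mem.le
        calc y = (2:ℝ)^(Real.logb 2 y) := (Real.rpow_logb two_pos (by norm_num) hy0).symm
        _ ≤ (2:ℝ)^(16*d) := Real.rpow_le_rpow_of_exponent_le one_le_two h1
      have hcube : y^3 ≤ (2:ℝ)^(48*d) := by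
        have h2 : y^3 ≤ ((2:ℝ)^(16*d))^(3:ℕ) := pow_le_pow_left₀ hy0.le hyK 3
        have h3 : ((2:ℝ)^(16*d))^(3:ℕ) = (2:ℝ)^(48*d) := by
          rw [← Real.rpow_natCast ((2:ℝ)^(16*d)) 3, ← Real.rpow_mul (by norm_num : (0:ℝ) ≤ 2)]
          norm_num
          ring_nf
        rw [h3] at h2; exact h2
      exact ⟨k, by omega, le_trans hP (by linarith)⟩
end

section
/- Let a, b, c be positive integers with γ²·a ≥ max(γ·b, c) where γ = 3000, and let g(t) = t/(log₂(2+t))². Then the link potential change ΔΦ (as defined by the eight-term expression for linking) is at most 2·g(log₂(a/c) + C) for an absolute constant C. -/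
noncomputable def g (t : ℝ) : ℝ := t / (Real.logb 2 (2 + t)) ^ 2

open Real


lemma log_one_add_ge {u : ℝ} (hu : 0 ≤ u) : 2*u ≤ Real.log (1+u) * (2+u) := by
  have hd : ∀ x : ℝ, 0 < x → HasDerivAt (fun u : ℝ => Real.log (1+u) * (2+u) - 2*u)
      (1/(1+x)*(2+x) + Real.log (1+x)*1 - 2) x := by
    intro x hx
    have h1 : HasDerivAt (fun u : ℝ => 1+u) 1 x := (hasDerivAt_id x).const_add 1
    have h2 : HasDerivAt (fun u : ℝ => Real.log (1+u)) (1/(1+x)) x :=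
      h1.log (by linarith)
    have h3 : HasDerivAt (fun u : ℝ => 2+u) 1 x := (hasDerivAt_id x).const_add 2
    have h4 := (h2.mul h3).sub ((hasDerivAt_id x).const_mul 2)
    exact h4.congr_deriv (by ring)
  have hd0 : ∀ x : ℝ, 0 ≤ x → HasDerivAt (fun u : ℝ => Real.log (1+u) * (2+u) - 2*u)
      (1/(1+x)*(2+x) + Real.log (1+x)*1 - 2) x := by
    intro x hx
    have h1 : HasDerivAt (fun u : ℝ => 1+u) 1 x := (hasDerivAt_id x).const_add 1
    have h2 : HasDerivAt (fun u : ℝ => Real.log (1+u)) (1/(1+x)) x :=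
      h1.log (by linarith)
    have h3 : HasDerivAt (fun u : ℝ => 2+u) 1 x := (hasDerivAt_id x).const_add 2
    have h4 := (h2.mul h3).sub ((hasDerivAt_id x).const_mul 2)
    exact h4.congr_deriv (by ring)
  have hmono : MonotoneOn (fun u : ℝ => Real.log (1+u) * (2+u) - 2*u) (Set.Ici 0) := by
    apply monotoneOn_of_hasDerivWithinAt_nonneg (convex_Ici 0)
      (fun x hx => ((hd0 x hx).continuousAt.continuousWithinAt))
      (fun x hx => ((hd x (by simpa using hx)).hasDerivWithinAt))
    intro x hx
    simp only [interior_Ici, Set.mem_Ioi] at hx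
    have hlog : 1 - 1/(1+x) ≤ Real.log (1+x) := by
      have h := Real.log_le_sub_one_of_pos (x := (1+x)⁻¹) (by positivity)
      rw [Real.log_inv] at h
      have : (1+x)⁻¹ = 1/(1+x) := (one_div _).symm
      linarith [h, this ▸ h]
    have h1x : (0:ℝ) < 1 + x := by linarith
    have : 1/(1+x)*(2+x) = 1 + 1/(1+x) := by field_simp; ring
    rw [this]
    have h2 : 1/(1+x) ≤ 1 := by rw [div_le_one h1x]; linarith
    nlinarith [hlog]
  have := hmono (Set.mem_Ici.2 le_rfl) (Set.mem_Ici.2 hu) hu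
  simpa using this

lemma key_log {x : ℝ} (hx : 0 ≤ x) : 2*x ≤ (2+x) * Real.log (2+x) := by
  have h2 : (0:ℝ) < 2 + x := by linarith
  have hsplit : Real.log (2+x) = Real.log 2 + Real.log (1+x/2) := by
    rw [← Real.log_mul (by norm_num) (by positivity)]
    ring_nf
  have haux := log_one_add_ge (u := x/2) (by linarith)
  have hl2 := Real.log_two_gt_d9
  nlinarith [haux, hl2, sq_nonneg x]



lemma L_ge_one {x : ℝ} (hx : 0 ≤ x) : 1 ≤ Real.logb 2 (2+x) := by
  have := Real.logb_le_logb_of_le (b := 2) (x := 2) (y := 2+x) one_lt_two two_pos (by linarith)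
  rwa [Real.logb_self_eq_one one_lt_two] at this


lemma g_monoOn : MonotoneOn g (Set.Ici 0) := by
  have hd : ∀ x : ℝ, 0 ≤ x → HasDerivAt g
      ((1 * Real.logb 2 (2+x) ^ 2 - x * (2 * Real.logb 2 (2+x) ^ 1 * (1/(2+x) / Real.log 2))) /
        (Real.logb 2 (2+x) ^ 2) ^ 2) x := by
    intro x hx
    have h1 : HasDerivAt (fun t : ℝ => 2+t) 1 x := (hasDerivAt_id x).const_add 2
    have h2 : HasDerivAt (fun t : ℝ => Real.log (2+t)) (1/(2+x)) x := h1.log (by linarith)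
    have h3 : HasDerivAt (fun t : ℝ => Real.logb 2 (2+t)) (1/(2+x) / Real.log 2) x := by
      simpa [Real.logb] using h2.div_const (Real.log 2)
    have h4 := h3.pow 2
    have hL : Real.logb 2 (2+x) ≠ 0 := by have := L_ge_one hx; linarith
    have h5 := (hasDerivAt_id x).div h4 (pow_ne_zero 2 hL)
    exact h5.congr_deriv (by norm_num)
  apply monotoneOn_of_hasDerivWithinAt_nonneg (convex_Ici 0)
    (fun x hx => ((hd x hx).continuousAt.continuousWithinAt))
    (fun x hx => ((hd x (le_of_lt (by simpa using hx))).hasDerivWithinAt))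
  intro x hx
  simp only [interior_Ici, Set.mem_Ioi] at hx
  set L := Real.logb 2 (2+x) with hLdef
  have hL1 : 1 ≤ L := L_ge_one hx.le
  have hlog2 : 0 < Real.log 2 := Real.log_pos one_lt_two
  have h2x : (0:ℝ) < 2 + x := by linarith
  have hLl : L * Real.log 2 = Real.log (2+x) := by
    rw [hLdef, Real.logb]; field_simp
  have hkey := key_log hx.le
  apply div_nonneg _ (by positivity)
  have e : 1*L^2 - x*(2*L^1*(1/(2+x)/Real.log 2))
      = L * ((2+x)*(L * Real.log 2) - 2*x) / ((2+x)*Real.log 2) := by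
    field_simp
  rw [e, hLl]
  apply div_nonneg (mul_nonneg (by linarith) (by linarith)) (by positivity)

lemma g_mono {u v : ℝ} (hu : 0 ≤ u) (huv : u ≤ v) : g u ≤ g v :=
  g_monoOn (Set.mem_Ici.2 hu) (Set.mem_Ici.2 (hu.trans huv)) huv

lemma g_subadd {x y : ℝ} (hx : 0 ≤ x) (hy : 0 ≤ y) : g (x+y) ≤ g x + g y := by
  unfold g
  have hLx := L_ge_one hx
  have hLy := L_ge_one hy
  have hLxy := L_ge_one (by linarith : (0:ℝ) ≤ x + y)
  have m1 : Real.logb 2 (2+x) ≤ Real.logb 2 (2+(x+y)) :=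
    Real.logb_le_logb_of_le one_lt_two (by linarith) (by linarith)
  have m2 : Real.logb 2 (2+y) ≤ Real.logb 2 (2+(x+y)) :=
    Real.logb_le_logb_of_le one_lt_two (by linarith) (by linarith)
  have e : (x+y)/(Real.logb 2 (2+(x+y)))^2
      = x/(Real.logb 2 (2+(x+y)))^2 + y/(Real.logb 2 (2+(x+y)))^2 := by ring
  rw [e]
  have b1 : x/(Real.logb 2 (2+(x+y)))^2 ≤ x/(Real.logb 2 (2+x))^2 :=
    div_le_div_of_nonneg_left hx (by nlinarith) (by nlinarith)
  have b2 : y/(Real.logb 2 (2+(x+y)))^2 ≤ y/(Real.logb 2 (2+y))^2 :=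
    div_le_div_of_nonneg_left hy (by nlinarith) (by nlinarith)
  linarith



lemma g_nonneg {x : ℝ} (hx : 0 ≤ x) : 0 ≤ g x := by
  unfold g; positivity

lemma g_le_self {x : ℝ} (hx : 0 ≤ x) : g x ≤ x := by
  unfold g
  have h := L_ge_one hx
  calc x / Real.logb 2 (2+x) ^ 2 ≤ x / 1 ^ 2 :=
        div_le_div_of_nonneg_left hx (by norm_num) (by nlinarith)
    _ = x := by norm_num

lemma g_split {u v d : ℝ} (hv : 0 ≤ v) (hd : 0 ≤ d) (hu : 0 ≤ u) (h : u ≤ v + d) :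
    g u ≤ g v + g d := (g_mono hu h).trans (g_subadd hv hd)

set_option maxHeartbeats 2000000 in
theorem stmt_12 : ∃ C : ℝ, ∀ a b c : ℝ,
    (∃ a' : ℕ, 0 < a' ∧ a = a') → (∃ b' : ℕ, 0 < b' ∧ b = b') → (∃ c' : ℕ, 0 < c' ∧ c = c') →
    (3000 : ℝ) ^ 2 * a ≥ max ((3000 : ℝ) * b) c →
    f ((a + b + 1) / a) + f ((a + b + 1) / b) + f ((a + b + c + 2) / (a + b + 1)) +
      f ((a + b + c + 2) / c) - f ((a + b + c + 2) / a) -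
      f ((a + b + c + 2) / (b + c + 1)) - f ((b + c + 1) / b) - f ((b + c + 1) / c) ≤ 2 * g (Real.logb 2 (a / c) + C) := by
  use 5000
  rintro a b c ⟨a', ha', rfl⟩ ⟨b', hb', rfl⟩ ⟨c', hc', rfl⟩ hmax
  set a : ℝ := (a' : ℝ) with hadef
  set b : ℝ := (b' : ℝ) with hbdef
  set c : ℝ := (c' : ℝ) with hcdef
  have ha : (1:ℝ) ≤ a := by rw [hadef]; exact_mod_cast ha'
  have hb : (1:ℝ) ≤ b := by rw [hbdef]; exact_mod_cast hb'
  have hc : (1:ℝ) ≤ c := by rw [hcdef]; exact_mod_cast hc'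
  have hc3 : c ≤ 9000000 * a := by
    have := le_trans (le_max_right ((3000:ℝ)*b) c) hmax
    nlinarith
  have apos : (0:ℝ) < a := by linarith
  have bpos : (0:ℝ) < b := by linarith
  have cpos : (0:ℝ) < c := by linarith
  have fg : ∀ x : ℝ, f x = g (Real.logb 2 x) := fun x => rfl
  simp only [fg]
  have lognn : ∀ p q : ℝ, 0 < q → q ≤ p → 0 ≤ Real.logb 2 (p/q) := fun p q h1 h2 =>
    Real.logb_nonneg one_lt_two ((one_le_div h1).2 h2)
  have logle : ∀ p q : ℝ, 0 < p → p ≤ q → Real.logb 2 p ≤ Real.logb 2 q := fun p q h1 h2 =>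
    Real.logb_le_logb_of_le one_lt_two h1 h2
  have h24 : Real.logb 2 16777216 = 24 := by
    rw [show (16777216:ℝ) = 2^(24:ℕ) by norm_num, Real.logb_pow,
      Real.logb_self_eq_one one_lt_two]
    norm_num
  -- nonnegativity of the eight log terms
  have nx1 := lognn (a+b+1) a apos (by linarith)
  have nx2 := lognn (a+b+1) b bpos (by linarith)
  have nx3 := lognn (a+b+c+2) (a+b+1) (by linarith) (by linarith)
  have nx4 := lognn (a+b+c+2) c cpos (by linarith)
  have nz1 := lognn (a+b+c+2) a apos (by linarith)
  have nz2 := lognn (a+b+c+2) (b+c+1) (by linarith) (by linarith)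
  have ny2 := lognn (b+c+1) b bpos (by linarith)
  have ny4 := lognn (b+c+1) c cpos (by linarith)
  -- term 1 : always
  have h1 : g (Real.logb 2 ((a+b+1)/a)) ≤ g (Real.logb 2 ((a+b+c+2)/a)) := by
    apply g_mono nx1
    apply logle _ _ (by positivity)
    exact (div_le_div_iff_of_pos_right apos).2 (by linarith)
  rcases le_total c a with hca | hac
  · -- case c ≤ a
    have hz : 0 ≤ Real.logb 2 (a/c) := lognn a c cpos hca
    have hzsplit : Real.logb 2 ((b+c+1)/b) + Real.logb 2 (a/c)
        = Real.logb 2 ((b+c+1)/b * (a/c)) := by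
      rw [Real.logb_mul (by positivity) (by positivity)]
    have h2 : g (Real.logb 2 ((a+b+1)/b)) ≤ g (Real.logb 2 ((b+c+1)/b)) + g (Real.logb 2 (a/c)) := by
      apply g_split ny2 hz nx2
      rw [hzsplit]
      apply logle _ _ (by positivity)
      rw [div_mul_div_comm, div_le_div_iff₀ bpos (by positivity)]
      nlinarith [mul_nonneg (mul_nonneg (sub_nonneg.2 hca) (by linarith : (0:ℝ) ≤ b)) (by linarith : (0:ℝ) ≤ b)]
    have honez : (0:ℝ) ≤ 1 + Real.logb 2 (a/c) := by linarith
    have h4 : g (Real.logb 2 ((a+b+c+2)/c)) ≤ g (Real.logb 2 ((b+c+1)/c)) + g (1 + Real.logb 2 (a/c)) := by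
      apply g_split ny4 honez nx4
      have e : Real.logb 2 ((b+c+1)/c) + (1 + Real.logb 2 (a/c))
          = Real.logb 2 ((b+c+1)/c * (2 * (a/c))) := by
        rw [Real.logb_mul (by positivity) (by positivity),
          Real.logb_mul (by norm_num) (by positivity), Real.logb_self_eq_one one_lt_two]
        try ring
      rw [e]
      apply logle _ _ (by positivity)
      rw [show (b+c+1)/c * (2*(a/c)) = ((b+c+1)*(2*a))/(c*c) by field_simp,
        div_le_div_iff₀ cpos (by positivity)]
      have inner4 : c*(a+b+c+2) ≤ (b+c+1)*(2*a) := by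
        nlinarith [mul_nonneg (sub_nonneg.2 hca) (by linarith : (0:ℝ) ≤ b),
          mul_nonneg (sub_nonneg.2 hca) (by linarith : (0:ℝ) ≤ c)]
      nlinarith [mul_le_mul_of_nonneg_right inner4 cpos.le]
    have h3 : g (Real.logb 2 ((a+b+c+2)/(a+b+1))) ≤ g (Real.logb 2 ((a+b+c+2)/(b+c+1))) := by
      apply g_mono nx3
      apply logle _ _ (by positivity)
      exact div_le_div_of_nonneg_left (by linarith) (by linarith) (by linarith)
    have hm1 : g (Real.logb 2 (a/c)) ≤ g (Real.logb 2 (a/c) + 5000) := g_mono hz (by linarith)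
    have hm2 : g (1 + Real.logb 2 (a/c)) ≤ g (Real.logb 2 (a/c) + 5000) := g_mono honez (by linarith)
    linarith
  · -- case a ≤ c
    have h2 : g (Real.logb 2 ((a+b+1)/b)) ≤ g (Real.logb 2 ((b+c+1)/b)) := by
      apply g_mono nx2
      apply logle _ _ (by positivity)
      exact (div_le_div_iff_of_pos_right bpos).2 (by linarith)
    have h4 : g (Real.logb 2 ((a+b+c+2)/c)) ≤ g (Real.logb 2 ((b+c+1)/c)) + g 1 := by
      apply g_split ny4 zero_le_one nx4
      have e : Real.logb 2 ((b+c+1)/c) + 1 = Real.logb 2 ((b+c+1)/c * 2) := by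
        rw [Real.logb_mul (by positivity) (by norm_num), Real.logb_self_eq_one one_lt_two]
      rw [e]
      apply logle _ _ (by positivity)
      rw [div_mul_eq_mul_div, div_le_div_iff₀ cpos cpos]
      nlinarith
    have h3 : g (Real.logb 2 ((a+b+c+2)/(a+b+1))) ≤ g (Real.logb 2 ((a+b+c+2)/(b+c+1))) + g 24 := by
      apply g_split nz2 (by norm_num) nx3
      have e : Real.logb 2 ((a+b+c+2)/(b+c+1)) + 24
          = Real.logb 2 ((a+b+c+2)/(b+c+1) * 16777216) := by
        rw [Real.logb_mul (by positivity) (by norm_num), h24]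
      rw [e]
      apply logle _ _ (by positivity)
      rw [div_mul_eq_mul_div, div_le_div_iff₀ (by linarith) (by linarith)]
      have inner3 : b+c+1 ≤ 16777216*(a+b+1) := by linarith
      have := mul_le_mul_of_nonneg_left inner3 (by linarith : (0:ℝ) ≤ a+b+c+2)
      nlinarith [this]
    have hg1 : g 1 ≤ 1 := g_le_self zero_le_one
    have hg24 : g 24 ≤ 24 := g_le_self (by norm_num)
    -- RHS lower bound
    have hz24 : -24 ≤ Real.logb 2 (a/c) := by
      have : (0:ℝ) ≤ Real.logb 2 (a/c * 16777216) := by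
        apply Real.logb_nonneg one_lt_two
        rw [div_mul_eq_mul_div, le_div_iff₀ cpos]
        nlinarith
      rw [Real.logb_mul (by positivity) (by norm_num), h24] at this
      linarith
    have hgbig : (4976:ℝ)/169 ≤ g 4976 := by
      unfold g
      have h13 : Real.logb 2 (2+4976) ≤ 13 := by
        have : Real.logb 2 (2+4976) ≤ Real.logb 2 8192 := logle _ _ (by norm_num) (by norm_num)
        rwa [show (8192:ℝ) = 2^(13:ℕ) by norm_num, Real.logb_pow,
          Real.logb_self_eq_one one_lt_two, mul_one] at this
      have h1 := L_ge_one (show (0:ℝ) ≤ 4976 by norm_num)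
      exact div_le_div_of_nonneg_left (by norm_num) (by nlinarith) (by nlinarith)
    have hmono : g 4976 ≤ g (Real.logb 2 (a/c) + 5000) := g_mono (by norm_num) (by linarith)
    have hnz1 : 0 ≤ g (Real.logb 2 ((a+b+c+2)/a)) := g_nonneg nz1
    linarith
end

section
/- For positive integers a, b with 1/γ ≤ a/b ≤ γ (γ = 3000), f((a+b+1)/a) + f((a+b+1)/b) ≤ 0.95, where f(x) = log₂(x)/(log₂(2+log₂ x))². -/
lemma phi_hasDeriv {v : ℝ} (hv : 0 ≤ v) :
    HasDerivAt (fun t : ℝ => t / (Real.log (2+t))^2)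
      ((1*(Real.log (2+v))^2 - v*(2*(Real.log (2+v))^1 * (1/(2+v))))/((Real.log (2+v))^2)^2) v := by
  have h2v : (0:ℝ) < 2 + v := by linarith
  have hlogpos : 0 < Real.log (2+v) := Real.log_pos (by linarith)
  have hg : HasDerivAt (fun t : ℝ => Real.log (2+t)) (1/(2+v)) v := by
    have h1 : HasDerivAt (fun t : ℝ => 2+t) 1 v := (hasDerivAt_id v).const_add 2
    exact h1.log (ne_of_gt h2v)
  exact (hasDerivAt_id v).div (hg.pow 2) (by positivity)

lemma phi_mono : MonotoneOn (fun t : ℝ => t / (Real.log (2+t))^2) (Set.Ici 0) := by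
  apply monotoneOn_of_deriv_nonneg (convex_Ici 0)
  · intro v hv
    exact (phi_hasDeriv hv).continuousAt.continuousWithinAt
  · intro v hv
    rw [interior_Ici] at hv
    exact (phi_hasDeriv hv.le).differentiableAt.differentiableWithinAt
  · intro v hv
    rw [interior_Ici] at hv
    rw [(phi_hasDeriv hv.le).deriv]
    have h2v : (0:ℝ) < 2 + v := by linarith [(Set.mem_Ioi.mp hv).le]
    have hlogpos : 0 < Real.log (2+v) := Real.log_pos (by linarith [(Set.mem_Ioi.mp hv).le])
    have hkey : Real.log (2+v) * (2+v) ≥ 2*v := by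
      have h1 : Real.log ((4:ℝ)/(2+v)) ≤ 4/(2+v) - 1 :=
        Real.log_le_sub_one_of_pos (by positivity)
      have h2 : Real.log ((4:ℝ)/(2+v)) = Real.log 4 - Real.log (2+v) :=
        Real.log_div (by norm_num) (ne_of_gt h2v)
      have h4 : Real.log (4:ℝ) = 2 * Real.log 2 := by
        rw [show (4:ℝ) = 2^2 by norm_num, Real.log_pow]; push_cast; ring
      have hl2 : 0.6931471803 < Real.log 2 := Real.log_two_gt_d9
      have h5 : Real.log (2+v) ≥ 2*Real.log 2 + 1 - 4/(2+v) := by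
        rw [h2, h4] at h1; linarith
      have h6 : (2+v) * (4/(2+v)) = 4 := by field_simp
      nlinarith [mul_le_mul_of_nonneg_left h5.ge.le (le_of_lt h2v)]
    have heq : 1*(Real.log (2+v))^2 - v*(2*(Real.log (2+v))^1 * (1/(2+v)))
        = Real.log (2+v)*(Real.log (2+v)*(2+v) - 2*v)/(2+v) := by
      field_simp
    rw [heq]
    have hnum : 0 ≤ Real.log (2+v)*(Real.log (2+v)*(2+v) - 2*v)/(2+v) :=
      div_nonneg (mul_nonneg hlogpos.le (by linarith)) h2v.le
    exact div_nonneg hnum (by positivity)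

lemma f_mono_s14 {x y : ℝ} (hx : 1 ≤ x) (hxy : x ≤ y) : f x ≤ f y := by
  have hx0 : (0:ℝ) < x := by linarith
  have hux : 0 ≤ Real.logb 2 x := Real.logb_nonneg one_lt_two hx
  have huy : 0 ≤ Real.logb 2 y := Real.logb_nonneg one_lt_two (le_trans hx hxy)
  have huxy : Real.logb 2 x ≤ Real.logb 2 y := Real.logb_le_logb_of_le one_lt_two hx0 hxy
  have hrw : ∀ u : ℝ, 0 ≤ u → u / (Real.logb 2 (2 + u))^2 = (Real.log 2)^2 * (u / (Real.log (2+u))^2) := by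
    intro u hu
    have h : Real.logb 2 (2+u) = Real.log (2+u) / Real.log 2 := rfl
    rw [h, div_pow, div_div_eq_mul_div]
    ring
  have h1 : f x = (Real.log 2)^2 * ((Real.logb 2 x) / (Real.log (2+Real.logb 2 x))^2) := hrw _ hux
  have h2 : f y = (Real.log 2)^2 * ((Real.logb 2 y) / (Real.log (2+Real.logb 2 y))^2) := hrw _ huy
  rw [h1, h2]
  exact mul_le_mul_of_nonneg_left
    (phi_mono (Set.mem_Ici.mpr hux) (Set.mem_Ici.mpr huy) huxy) (sq_nonneg _)

lemma pair_le {x y : ℝ} (X Y cX cY : ℝ) (hx1 : 1 ≤ x) (hy1 : 1 ≤ y) (hxX : x ≤ X) (hyY : y ≤ Y)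
    (hfX : f X ≤ cX) (hfY : f Y ≤ cY) (hs : cX + cY ≤ 0.95) : f x + f y ≤ 0.95 := by
  have h1 := f_mono_s14 hx1 hxX
  have h2 := f_mono_s14 hy1 hyY
  linarith

lemma f_le_num (x u₁ u₂ d₁ c : ℝ) (h0 : 0 ≤ u₁) (h1 : u₁ ≤ Real.logb 2 x)
    (h2 : Real.logb 2 x ≤ u₂) (h3 : d₁ ≤ Real.logb 2 (2 + u₁)) (hd : 0 < d₁)
    (hc : u₂ / d₁^2 ≤ c) : f x ≤ c := by
  have hnum0 : 0 ≤ Real.logb 2 x := le_trans h0 h1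
  have hden : d₁ ≤ Real.logb 2 (2 + Real.logb 2 x) :=
    le_trans h3 (Real.logb_le_logb_of_le one_lt_two (by linarith) (by linarith))
  have hstep : Real.logb 2 x / (Real.logb 2 (2 + Real.logb 2 x))^2 ≤ u₂ / d₁^2 :=
    div_le_div₀ (le_trans hnum0 h2) h2 (by positivity)
      (pow_le_pow_left₀ hd.le hden 2)
  exact le_trans hstep hc

lemma log_rat_bounds (m x0 S E L U : ℝ) (hm : 1 - x0 = m) (hx : |x0| < 1) (n : ℕ)
    (hS : (∑ i ∈ Finset.range n, x0 ^ (i+1) / (i+1)) = S)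
    (hE : |x0| ^ (n+1) / (1 - |x0|) ≤ E)
    (hL : L ≤ -S - E) (hU : -S + E ≤ U) :
    L ≤ Real.log m ∧ Real.log m ≤ U := by
  have h := Real.abs_log_sub_add_sum_range_le hx n
  rw [hS, hm, abs_le] at h
  exact ⟨by linarith [h.1], by linarith [h.2]⟩

lemma log_scale (r m : ℝ) (k : ℕ) (hr : r = 2^k * m) (hm0 : 0 < m) (lm um L U : ℝ)
    (h1 : lm ≤ Real.log m) (h2 : Real.log m ≤ um)
    (hL : L ≤ (k : ℝ) * 0.6931471803 + lm) (hU : (k : ℝ) * 0.6931471808 + um ≤ U) :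
    L ≤ Real.log r ∧ Real.log r ≤ U := by
  have heq : Real.log r = (k : ℝ) * Real.log 2 + Real.log m := by
    rw [hr, Real.log_mul (by positivity) (ne_of_gt hm0), Real.log_pow]
  have l2l := Real.log_two_gt_d9
  have l2u := Real.log_two_lt_d9
  have hk : (0:ℝ) ≤ (k : ℝ) := Nat.cast_nonneg k
  rw [heq]
  constructor <;> nlinarith

lemma logb_ge_of (r u L : ℝ) (hL : L ≤ Real.log r) (h : u * 0.6931471808 ≤ L) (hu : 0 ≤ u) :
    u ≤ Real.logb 2 r := by
  rw [Real.logb, le_div_iff₀ (Real.log_pos one_lt_two)]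
  nlinarith [Real.log_two_lt_d9]

lemma logb_le_of (r u U : ℝ) (hU : Real.log r ≤ U) (h : U ≤ u * 0.6931471803) (hu : 0 ≤ u) :
    Real.logb 2 r ≤ u := by
  rw [Real.logb, div_le_iff₀ (Real.log_pos one_lt_two)]
  nlinarith [Real.log_two_gt_d9]
lemma fb_X105 : f (21/20 : ℝ) ≤ (3193/50000 : ℝ) := by
  have hm1 := log_rat_bounds (21/20 : ℝ) (-1/20 : ℝ) (-6245141/128000000 : ℝ) (823/1000000000000 : ℝ) (48790163239/1000000000000 : ℝ) (24395082443/500000000000 : ℝ) (by norm_num) (by rw [(abs_of_nonpos (by norm_num : (-1/20 : ℝ) ≤ (0:ℝ)))]; norm_num) 6 (by norm_num [Finset.sum_range_succ]) (by rw [(abs_of_nonpos (by norm_num : (-1/20 : ℝ) ≤ (0:ℝ)))]; norm_num) (by norm_num) (by norm_num)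
  have hr1 := log_scale (21/20 : ℝ) (21/20 : ℝ) 0 (by norm_num) (by norm_num) (48790163239/1000000000000 : ℝ) (24395082443/500000000000 : ℝ) (48790163239/1000000000000 : ℝ) (24395082443/500000000000 : ℝ) hm1.1 hm1.2 (by norm_num) (by norm_num)
  have hu1 : (70389/1000000 : ℝ) ≤ Real.logb 2 (21/20 : ℝ) := logb_ge_of _ _ _ hr1.1 (by norm_num) (by norm_num)
  have hu2 : Real.logb 2 (21/20 : ℝ) ≤ (7039/100000 : ℝ) := logb_le_of _ _ _ hr1.2 (by norm_num) (by norm_num)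
  have hm2 := log_rat_bounds (2070389/2000000 : ℝ) (-70389/2000000 : ℝ) (-4427434465038989127832468407635123613/128000000000000000000000000000000000000 : ℝ) (7/100000000000 : ℝ) (4323666461/125000000000 : ℝ) (34589331829/1000000000000 : ℝ) (by norm_num) (by rw [(abs_of_nonpos (by norm_num : (-70389/2000000 : ℝ) ≤ (0:ℝ)))]; norm_num) 6 (by norm_num [Finset.sum_range_succ]) (by rw [(abs_of_nonpos (by norm_num : (-70389/2000000 : ℝ) ≤ (0:ℝ)))]; norm_num) (by norm_num) (by norm_num)
  have hr2 := log_scale ((2:ℝ) + (70389/1000000 : ℝ)) (2070389/2000000 : ℝ) 1 (by norm_num) (by norm_num) (4323666461/125000000000 : ℝ) (34589331829/1000000000000 : ℝ) (181934127997/250000000000 : ℝ) (727736512629/1000000000000 : ℝ) hm2.1 hm2.2 (by norm_num) (by norm_num)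
  have hd1 : (1049901/1000000 : ℝ) ≤ Real.logb 2 (2 + (70389/1000000 : ℝ)) := logb_ge_of _ _ _ hr2.1 (by norm_num) (by norm_num)
  exact f_le_num _ _ _ _ _ (by norm_num) hu1 hu2 hd1 (by norm_num) (by norm_num)

lemma fb_X12 : f (6/5 : ℝ) ≤ (18947/100000 : ℝ) := by
  have hm1 := log_rat_bounds (6/5 : ℝ) (-1/5 : ℝ) (-16040379934039/87978515625000 : ℝ) (41/200000000000 : ℝ) (91160778299/500000000000 : ℝ) (182321557009/1000000000000 : ℝ) (by norm_num) (by rw [(abs_of_nonpos (by norm_num : (-1/5 : ℝ) ≤ (0:ℝ)))]; norm_num) 13 (by norm_num [Finset.sum_range_succ]) (by rw [(abs_of_nonpos (by norm_num : (-1/5 : ℝ) ≤ (0:ℝ)))]; norm_num) (by norm_num) (by norm_num)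
  have hr1 := log_scale (6/5 : ℝ) (6/5 : ℝ) 0 (by norm_num) (by norm_num) (91160778299/500000000000 : ℝ) (182321557009/1000000000000 : ℝ) (91160778299/500000000000 : ℝ) (182321557009/1000000000000 : ℝ) hm1.1 hm1.2 (by norm_num) (by norm_num)
  have hu1 : (131517/500000 : ℝ) ≤ Real.logb 2 (6/5 : ℝ) := logb_ge_of _ _ _ hr1.1 (by norm_num) (by norm_num)
  have hu2 : Real.logb 2 (6/5 : ℝ) ≤ (52607/200000 : ℝ) := logb_le_of _ _ _ hr1.2 (by norm_num) (by norm_num)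
  have hm2 := log_rat_bounds (1131517/1000000 : ℝ) (-131517/1000000 : ℝ) (-8649144718626475701810225228563857127131998223422061539061857/70000000000000000000000000000000000000000000000000000000000000 : ℝ) (47/200000000000 : ℝ) (123559210031/1000000000000 : ℝ) (61779605251/500000000000 : ℝ) (by norm_num) (by rw [(abs_of_nonpos (by norm_num : (-131517/1000000 : ℝ) ≤ (0:ℝ)))]; norm_num) 10 (by norm_num [Finset.sum_range_succ]) (by rw [(abs_of_nonpos (by norm_num : (-131517/1000000 : ℝ) ≤ (0:ℝ)))]; norm_num) (by norm_num) (by norm_num)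
  have hr2 := log_scale ((2:ℝ) + (131517/500000 : ℝ)) (1131517/1000000 : ℝ) 1 (by norm_num) (by norm_num) (123559210031/1000000000000 : ℝ) (61779605251/500000000000 : ℝ) (816706390331/1000000000000 : ℝ) (408353195651/500000000000 : ℝ) hm2.1 hm2.2 (by norm_num) (by norm_num)
  have hd1 : (589129/500000 : ℝ) ≤ Real.logb 2 (2 + (131517/500000 : ℝ)) := logb_ge_of _ _ _ hr2.1 (by norm_num) (by norm_num)
  exact f_le_num _ _ _ _ _ (by norm_num) hu1 hu2 hd1 (by norm_num) (by norm_num)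

lemma fb_X15 : f (3/2 : ℝ) ≤ (779/2500 : ℝ) := by
  have hm1 := log_rat_bounds (3/4 : ℝ) (1/4 : ℝ) (2782846525133/9673340092416 : ℝ) (311/1000000000000 : ℝ) (-35960259093/125000000000 : ℝ) (-287682072121/1000000000000 : ℝ) (by norm_num) (by rw [(abs_of_nonneg (by norm_num : (0:ℝ) ≤ (1/4 : ℝ)))]; norm_num) 15 (by norm_num [Finset.sum_range_succ]) (by rw [(abs_of_nonneg (by norm_num : (0:ℝ) ≤ (1/4 : ℝ)))]; norm_num) (by norm_num) (by norm_num)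
  have hr1 := log_scale (3/2 : ℝ) (3/4 : ℝ) 1 (by norm_num) (by norm_num) (-35960259093/125000000000 : ℝ) (-287682072121/1000000000000 : ℝ) (101366276889/250000000000 : ℝ) (405465108679/1000000000000 : ℝ) hm1.1 hm1.2 (by norm_num) (by norm_num)
  have hu1 : (292481/500000 : ℝ) ≤ Real.logb 2 (3/2 : ℝ) := logb_ge_of _ _ _ hr1.1 (by norm_num) (by norm_num)
  have hu2 : Real.logb 2 (3/2 : ℝ) ≤ (584963/1000000 : ℝ) := logb_le_of _ _ _ hr1.2 (by norm_num) (by norm_num)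
  have hm2 := log_rat_bounds (1292481/1000000 : ℝ) (-292481/1000000 : ℝ) (-5613355597532000281423813107848796518473518422013731123337529479216482911558659606527899304257287934466507/21879000000000000000000000000000000000000000000000000000000000000000000000000000000000000000000000000000000 : ℝ) (347/1000000000000 : ℝ) (128281813381/500000000000 : ℝ) (256563627457/1000000000000 : ℝ) (by norm_num) (by rw [(abs_of_nonpos (by norm_num : (-292481/1000000 : ℝ) ≤ (0:ℝ)))]; norm_num) 17 (by norm_num [Finset.sum_range_succ]) (by rw [(abs_of_nonpos (by norm_num : (-292481/1000000 : ℝ) ≤ (0:ℝ)))]; norm_num) (by norm_num) (by norm_num)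
  have hr2 := log_scale ((2:ℝ) + (292481/500000 : ℝ)) (1292481/1000000 : ℝ) 1 (by norm_num) (by norm_num) (128281813381/500000000000 : ℝ) (256563627457/1000000000000 : ℝ) (474855403531/500000000000 : ℝ) (949710808257/1000000000000 : ℝ) hm2.1 hm2.2 (by norm_num) (by norm_num)
  have hd1 : (1370143/1000000 : ℝ) ≤ Real.logb 2 (2 + (292481/500000 : ℝ)) := logb_ge_of _ _ _ hr2.1 (by norm_num) (by norm_num)
  exact f_le_num _ _ _ _ _ (by norm_num) hu1 hu2 hd1 (by norm_num) (by norm_num)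

lemma fb_X2 : f (2 : ℝ) ≤ (1244/3125 : ℝ) := by
  have hm1 := log_rat_bounds (1 : ℝ) (0 : ℝ) (0 : ℝ) (0 : ℝ) (0 : ℝ) (0 : ℝ) (by norm_num) (by rw [(abs_of_nonneg (by norm_num : (0:ℝ) ≤ (0 : ℝ)))]; norm_num) 1 (by norm_num [Finset.sum_range_succ]) (by rw [(abs_of_nonneg (by norm_num : (0:ℝ) ≤ (0 : ℝ)))]; norm_num) (by norm_num) (by norm_num)
  have hr1 := log_scale (2 : ℝ) (1 : ℝ) 1 (by norm_num) (by norm_num) (0 : ℝ) (0 : ℝ) (6931471803/10000000000 : ℝ) (108304247/156250000 : ℝ) hm1.1 hm1.2 (by norm_num) (by norm_num)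
  have hu1 : (999999/1000000 : ℝ) ≤ Real.logb 2 (2 : ℝ) := logb_ge_of _ _ _ hr1.1 (by norm_num) (by norm_num)
  have hu2 : Real.logb 2 (2 : ℝ) ≤ (1000001/1000000 : ℝ) := logb_le_of _ _ _ hr1.2 (by norm_num) (by norm_num)
  have hm2 := log_rat_bounds (2999999/4000000 : ℝ) (1000001/4000000 : ℝ) (13914248747901159384396564356963133768403677986091117450539892572384756704039298498495550935057915003003/48366700462080000000000000000000000000000000000000000000000000000000000000000000000000000000000000000000 : ℝ) (311/1000000000000 : ℝ) (-143841203039/500000000000 : ℝ) (-57536481091/200000000000 : ℝ) (by norm_num) (by rw [(abs_of_nonneg (by norm_num : (0:ℝ) ≤ (1000001/4000000 : ℝ)))]; norm_num) 15 (by norm_num [Finset.sum_range_succ]) (by rw [(abs_of_nonneg (by norm_num : (0:ℝ) ≤ (1000001/4000000 : ℝ)))]; norm_num) (by norm_num) (by norm_num)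
  have hr2 := log_scale ((2:ℝ) + (999999/1000000 : ℝ)) (2999999/4000000 : ℝ) 2 (by norm_num) (by norm_num) (-143841203039/500000000000 : ℝ) (-57536481091/200000000000 : ℝ) (549305977261/500000000000 : ℝ) (219722391229/200000000000 : ℝ) hm2.1 hm2.2 (by norm_num) (by norm_num)
  have hd1 : (792481/500000 : ℝ) ≤ Real.logb 2 (2 + (999999/1000000 : ℝ)) := logb_ge_of _ _ _ hr2.1 (by norm_num) (by norm_num)
  exact f_le_num _ _ _ _ _ (by norm_num) hu1 hu2 hd1 (by norm_num) (by norm_num)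

lemma fb_X26 : f (13/5 : ℝ) ≤ (22343/50000 : ℝ) := by
  have hm1 := log_rat_bounds (13/10 : ℝ) (-3/10 : ℝ) (-3571722150982831728699/13613600000000000000000 : ℝ) (277/500000000000 : ℝ) (26236426393/100000000000 : ℝ) (262364265039/1000000000000 : ℝ) (by norm_num) (by rw [(abs_of_nonpos (by norm_num : (-3/10 : ℝ) ≤ (0:ℝ)))]; norm_num) 17 (by norm_num [Finset.sum_range_succ]) (by rw [(abs_of_nonpos (by norm_num : (-3/10 : ℝ) ≤ (0:ℝ)))]; norm_num) (by norm_num) (by norm_num)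
  have hr1 := log_scale (13/5 : ℝ) (13/10 : ℝ) 1 (by norm_num) (by norm_num) (26236426393/100000000000 : ℝ) (262364265039/1000000000000 : ℝ) (95551144423/100000000000 : ℝ) (955511445839/1000000000000 : ℝ) hm1.1 hm1.2 (by norm_num) (by norm_num)
  have hu1 : (1378511/1000000 : ℝ) ≤ Real.logb 2 (13/5 : ℝ) := logb_ge_of _ _ _ hr1.1 (by norm_num) (by norm_num)
  have hu2 : Real.logb 2 (13/5 : ℝ) ≤ (86157/62500 : ℝ) := logb_le_of _ _ _ hr1.2 (by norm_num) (by norm_num)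
  have hm2 := log_rat_bounds (3378511/4000000 : ℝ) (621489/4000000 : ℝ) (4957730110403227794248575144309545632677661397550314203419708316656228293/29360128000000000000000000000000000000000000000000000000000000000000000000 : ℝ) (47/200000000000 : ℝ) (-168859281449/1000000000000 : ℝ) (-84429640489/500000000000 : ℝ) (by norm_num) (by rw [(abs_of_nonneg (by norm_num : (0:ℝ) ≤ (621489/4000000 : ℝ)))]; norm_num) 11 (by norm_num [Finset.sum_range_succ]) (by rw [(abs_of_nonneg (by norm_num : (0:ℝ) ≤ (621489/4000000 : ℝ)))]; norm_num) (by norm_num) (by norm_num)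
  have hr2 := log_scale ((2:ℝ) + (1378511/1000000 : ℝ)) (3378511/4000000 : ℝ) 2 (by norm_num) (by norm_num) (-168859281449/1000000000000 : ℝ) (-84429640489/500000000000 : ℝ) (1217435079151/1000000000000 : ℝ) (608717540311/500000000000 : ℝ) hm2.1 hm2.2 (by norm_num) (by norm_num)
  have hd1 : (1756387/1000000 : ℝ) ≤ Real.logb 2 (2 + (1378511/1000000 : ℝ)) := logb_ge_of _ _ _ hr2.1 (by norm_num) (by norm_num)
  exact f_le_num _ _ _ _ _ (by norm_num) hu1 hu2 hd1 (by norm_num) (by norm_num)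

lemma fb_X3 : f (3 : ℝ) ≤ (11679/25000 : ℝ) := by
  have hm1 := log_rat_bounds (3/4 : ℝ) (1/4 : ℝ) (2782846525133/9673340092416 : ℝ) (311/1000000000000 : ℝ) (-35960259093/125000000000 : ℝ) (-287682072121/1000000000000 : ℝ) (by norm_num) (by rw [(abs_of_nonneg (by norm_num : (0:ℝ) ≤ (1/4 : ℝ)))]; norm_num) 15 (by norm_num [Finset.sum_range_succ]) (by rw [(abs_of_nonneg (by norm_num : (0:ℝ) ≤ (1/4 : ℝ)))]; norm_num) (by norm_num) (by norm_num)
  have hr1 := log_scale (3 : ℝ) (3/4 : ℝ) 2 (by norm_num) (by norm_num) (-35960259093/125000000000 : ℝ) (-287682072121/1000000000000 : ℝ) (68663267991/62500000000 : ℝ) (1098612289479/1000000000000 : ℝ) hm1.1 hm1.2 (by norm_num) (by norm_num)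
  have hu1 : (792481/500000 : ℝ) ≤ Real.logb 2 (3 : ℝ) := logb_ge_of _ _ _ hr1.1 (by norm_num) (by norm_num)
  have hu2 : Real.logb 2 (3 : ℝ) ≤ (1584963/1000000 : ℝ) := logb_le_of _ _ _ hr1.2 (by norm_num) (by norm_num)
  have hm2 := log_rat_bounds (1792481/2000000 : ℝ) (207519/2000000 : ℝ) (392614608797189069154259084504303870591881570061265345217/3584000000000000000000000000000000000000000000000000000000 : ℝ) (81/500000000000 : ℝ) (-6846655437/62500000000 : ℝ) (-109546486667/1000000000000 : ℝ) (by norm_num) (by rw [(abs_of_nonneg (by norm_num : (0:ℝ) ≤ (207519/2000000 : ℝ)))]; norm_num) 9 (by norm_num [Finset.sum_range_succ]) (by rw [(abs_of_nonneg (by norm_num : (0:ℝ) ≤ (207519/2000000 : ℝ)))]; norm_num) (by norm_num) (by norm_num)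
  have hr2 := log_scale ((2:ℝ) + (792481/500000 : ℝ)) (1792481/2000000 : ℝ) 2 (by norm_num) (by norm_num) (-6846655437/62500000000 : ℝ) (-109546486667/1000000000000 : ℝ) (159593484201/125000000000 : ℝ) (1276747874933/1000000000000 : ℝ) hm2.1 hm2.2 (by norm_num) (by norm_num)
  have hd1 : (1841957/1000000 : ℝ) ≤ Real.logb 2 (2 + (792481/500000 : ℝ)) := logb_ge_of _ _ _ hr2.1 (by norm_num) (by norm_num)
  exact f_le_num _ _ _ _ _ (by norm_num) hu1 hu2 hd1 (by norm_num) (by norm_num)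

lemma fb_Y325 : f (13/4 : ℝ) ≤ (1193/2500 : ℝ) := by
  have hm1 := log_rat_bounds (13/16 : ℝ) (3/16 : ℝ) (18001147889613759/86694292826882048 : ℝ) (109/250000000000 : ℝ) (-103819682591/500000000000 : ℝ) (-207639364309/1000000000000 : ℝ) (by norm_num) (by rw [(abs_of_nonneg (by norm_num : (0:ℝ) ≤ (3/16 : ℝ)))]; norm_num) 12 (by norm_num [Finset.sum_range_succ]) (by rw [(abs_of_nonneg (by norm_num : (0:ℝ) ≤ (3/16 : ℝ)))]; norm_num) (by norm_num) (by norm_num)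
  have hr1 := log_scale (13/4 : ℝ) (13/16 : ℝ) 2 (by norm_num) (by norm_num) (-103819682591/500000000000 : ℝ) (-207639364309/1000000000000 : ℝ) (589327497709/500000000000 : ℝ) (1178654997291/1000000000000 : ℝ) hm1.1 hm1.2 (by norm_num) (by norm_num)
  have hu1 : (1700439/1000000 : ℝ) ≤ Real.logb 2 (13/4 : ℝ) := logb_ge_of _ _ _ hr1.1 (by norm_num) (by norm_num)
  have hu2 : Real.logb 2 (13/4 : ℝ) ≤ (42511/25000 : ℝ) := logb_le_of _ _ _ hr1.2 (by norm_num) (by norm_num)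
  have hm2 := log_rat_bounds (3700439/4000000 : ℝ) (299561/4000000 : ℝ) (857054063812409356405273737099802971296973051488578901/11010048000000000000000000000000000000000000000000000000 : ℝ) (81/1000000000000 : ℝ) (-19460724983/250000000000 : ℝ) (-77842899769/1000000000000 : ℝ) (by norm_num) (by rw [(abs_of_nonneg (by norm_num : (0:ℝ) ≤ (299561/4000000 : ℝ)))]; norm_num) 8 (by norm_num [Finset.sum_range_succ]) (by rw [(abs_of_nonneg (by norm_num : (0:ℝ) ≤ (299561/4000000 : ℝ)))]; norm_num) (by norm_num) (by norm_num)
  have hr2 := log_scale ((2:ℝ) + (1700439/1000000 : ℝ)) (3700439/4000000 : ℝ) 2 (by norm_num) (by norm_num) (-19460724983/250000000000 : ℝ) (-77842899769/1000000000000 : ℝ) (327112865167/250000000000 : ℝ) (1308451461831/1000000000000 : ℝ) hm2.1 hm2.2 (by norm_num) (by norm_num)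
  have hd1 : (117981/62500 : ℝ) ≤ Real.logb 2 (2 + (1700439/1000000 : ℝ)) := logb_ge_of _ _ _ hr2.1 (by norm_num) (by norm_num)
  exact f_le_num _ _ _ _ _ (by norm_num) hu1 hu2 hd1 (by norm_num) (by norm_num)

lemma fb_Y4 : f (4 : ℝ) ≤ (50001/100000 : ℝ) := by
  have hm1 := log_rat_bounds (1 : ℝ) (0 : ℝ) (0 : ℝ) (0 : ℝ) (0 : ℝ) (0 : ℝ) (by norm_num) (by rw [(abs_of_nonneg (by norm_num : (0:ℝ) ≤ (0 : ℝ)))]; norm_num) 1 (by norm_num [Finset.sum_range_succ]) (by rw [(abs_of_nonneg (by norm_num : (0:ℝ) ≤ (0 : ℝ)))]; norm_num) (by norm_num) (by norm_num)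
  have hr1 := log_scale (4 : ℝ) (1 : ℝ) 2 (by norm_num) (by norm_num) (0 : ℝ) (0 : ℝ) (6931471803/5000000000 : ℝ) (108304247/78125000 : ℝ) hm1.1 hm1.2 (by norm_num) (by norm_num)
  have hu1 : (1999999/1000000 : ℝ) ≤ Real.logb 2 (4 : ℝ) := logb_ge_of _ _ _ hr1.1 (by norm_num) (by norm_num)
  have hu2 : Real.logb 2 (4 : ℝ) ≤ (2000001/1000000 : ℝ) := logb_le_of _ _ _ hr1.2 (by norm_num) (by norm_num)
  have hm2 := log_rat_bounds (3999999/4000000 : ℝ) (1/4000000 : ℝ) (1/4000000 : ℝ) (1/1000000000000 : ℝ) (-250001/1000000000000 : ℝ) (-249999/1000000000000 : ℝ) (by norm_num) (by rw [(abs_of_nonneg (by norm_num : (0:ℝ) ≤ (1/4000000 : ℝ)))]; norm_num) 1 (by norm_num [Finset.sum_range_succ]) (by rw [(abs_of_nonneg (by norm_num : (0:ℝ) ≤ (1/4000000 : ℝ)))]; norm_num) (by norm_num) (by norm_num)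
  have hr2 := log_scale ((2:ℝ) + (1999999/1000000 : ℝ)) (3999999/4000000 : ℝ) 2 (by norm_num) (by norm_num) (-250001/1000000000000 : ℝ) (-249999/1000000000000 : ℝ) (1386294110599/1000000000000 : ℝ) (1386294111601/1000000000000 : ℝ) hm2.1 hm2.2 (by norm_num) (by norm_num)
  have hd1 : (1999999/1000000 : ℝ) ≤ Real.logb 2 (2 + (1999999/1000000 : ℝ)) := logb_ge_of _ _ _ hr2.1 (by norm_num) (by norm_num)
  exact f_le_num _ _ _ _ _ (by norm_num) hu1 hu2 hd1 (by norm_num) (by norm_num)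

lemma fb_Y6 : f (6 : ℝ) ≤ (53559/100000 : ℝ) := by
  have hm1 := log_rat_bounds (3/4 : ℝ) (1/4 : ℝ) (2782846525133/9673340092416 : ℝ) (311/1000000000000 : ℝ) (-35960259093/125000000000 : ℝ) (-287682072121/1000000000000 : ℝ) (by norm_num) (by rw [(abs_of_nonneg (by norm_num : (0:ℝ) ≤ (1/4 : ℝ)))]; norm_num) 15 (by norm_num [Finset.sum_range_succ]) (by rw [(abs_of_nonneg (by norm_num : (0:ℝ) ≤ (1/4 : ℝ)))]; norm_num) (by norm_num) (by norm_num)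
  have hr1 := log_scale (6 : ℝ) (3/4 : ℝ) 3 (by norm_num) (by norm_num) (-35960259093/125000000000 : ℝ) (-287682072121/1000000000000 : ℝ) (447939867039/250000000000 : ℝ) (1791759470279/1000000000000 : ℝ) hm1.1 hm1.2 (by norm_num) (by norm_num)
  have hu1 : (1292481/500000 : ℝ) ≤ Real.logb 2 (6 : ℝ) := logb_ge_of _ _ _ hr1.1 (by norm_num) (by norm_num)
  have hu2 : Real.logb 2 (6 : ℝ) ≤ (2584963/1000000 : ℝ) := logb_le_of _ _ _ hr1.2 (by norm_num) (by norm_num)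
  have hm2 := log_rat_bounds (2292481/2000000 : ℝ) (-292481/2000000 : ℝ) (-12578684000848596338199830416776568226284862104515875403574604791/92160000000000000000000000000000000000000000000000000000000000000 : ℝ) (767/1000000000000 : ℝ) (136487455839/1000000000000 : ℝ) (68243728687/500000000000 : ℝ) (by norm_num) (by rw [(abs_of_nonpos (by norm_num : (-292481/2000000 : ℝ) ≤ (0:ℝ)))]; norm_num) 10 (by norm_num [Finset.sum_range_succ]) (by rw [(abs_of_nonpos (by norm_num : (-292481/2000000 : ℝ) ≤ (0:ℝ)))]; norm_num) (by norm_num) (by norm_num)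
  have hr2 := log_scale ((2:ℝ) + (1292481/500000 : ℝ)) (2292481/2000000 : ℝ) 2 (by norm_num) (by norm_num) (136487455839/1000000000000 : ℝ) (68243728687/500000000000 : ℝ) (1522781816439/1000000000000 : ℝ) (761390909487/500000000000 : ℝ) hm2.1 hm2.2 (by norm_num) (by norm_num)
  have hd1 : (2196909/1000000 : ℝ) ≤ Real.logb 2 (2 + (1292481/500000 : ℝ)) := logb_ge_of _ _ _ hr2.1 (by norm_num) (by norm_num)
  exact f_le_num _ _ _ _ _ (by norm_num) hu1 hu2 hd1 (by norm_num) (by norm_num)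

lemma fb_Y12 : f (12 : ℝ) ≤ (7277/12500 : ℝ) := by
  have hm1 := log_rat_bounds (3/4 : ℝ) (1/4 : ℝ) (2782846525133/9673340092416 : ℝ) (311/1000000000000 : ℝ) (-35960259093/125000000000 : ℝ) (-287682072121/1000000000000 : ℝ) (by norm_num) (by rw [(abs_of_nonneg (by norm_num : (0:ℝ) ≤ (1/4 : ℝ)))]; norm_num) 15 (by norm_num [Finset.sum_range_succ]) (by rw [(abs_of_nonneg (by norm_num : (0:ℝ) ≤ (1/4 : ℝ)))]; norm_num) (by norm_num) (by norm_num)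
  have hr1 := log_scale (12 : ℝ) (3/4 : ℝ) 4 (by norm_num) (by norm_num) (-35960259093/125000000000 : ℝ) (-287682072121/1000000000000 : ℝ) (310613331057/125000000000 : ℝ) (2484906651079/1000000000000 : ℝ) hm1.1 hm1.2 (by norm_num) (by norm_num)
  have hu1 : (1792481/500000 : ℝ) ≤ Real.logb 2 (12 : ℝ) := logb_ge_of _ _ _ hr1.1 (by norm_num) (by norm_num)
  have hu2 : Real.logb 2 (12 : ℝ) ≤ (3584963/1000000 : ℝ) := logb_le_of _ _ _ hr1.2 (by norm_num) (by norm_num)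
  have hm2 := log_rat_bounds (2792481/2000000 : ℝ) (-792481/2000000 : ℝ) (-905296959482660600899601382518447842860893005142936161261326038367911698858432561083915151443521841149796473540819566803343317380507504526345327/2712229904384000000000000000000000000000000000000000000000000000000000000000000000000000000000000000000000000000000000000000000000000000000000000 : ℝ) (469/500000000000 : ℝ) (333783266483/1000000000000 : ℝ) (8344581709/25000000000 : ℝ) (by norm_num) (by rw [(abs_of_nonpos (by norm_num : (-792481/2000000 : ℝ) ≤ (0:ℝ)))]; norm_num) 22 (by norm_num [Finset.sum_range_succ]) (by rw [(abs_of_nonpos (by norm_num : (-792481/2000000 : ℝ) ≤ (0:ℝ)))]; norm_num) (by norm_num) (by norm_num)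
  have hr2 := log_scale ((2:ℝ) + (1792481/500000 : ℝ)) (2792481/2000000 : ℝ) 2 (by norm_num) (by norm_num) (333783266483/1000000000000 : ℝ) (8344581709/25000000000 : ℝ) (1720077627083/1000000000000 : ℝ) (43001940749/25000000000 : ℝ) hm2.1 hm2.2 (by norm_num) (by norm_num)
  have hd1 : (2481547/1000000 : ℝ) ≤ Real.logb 2 (2 + (1792481/500000 : ℝ)) := logb_ge_of _ _ _ hr2.1 (by norm_num) (by norm_num)
  exact f_le_num _ _ _ _ _ (by norm_num) hu1 hu2 hd1 (by norm_num) (by norm_num)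

lemma fb_Y42 : f (42 : ℝ) ≤ (64741/100000 : ℝ) := by
  have hm1 := log_rat_bounds (21/16 : ℝ) (-5/16 : ℝ) (-131116393086083400298277285/482163062633956515608788992 : ℝ) (23/62500000000 : ℝ) (54386743021/200000000000 : ℝ) (135966857921/500000000000 : ℝ) (by norm_num) (by rw [(abs_of_nonpos (by norm_num : (-5/16 : ℝ) ≤ (0:ℝ)))]; norm_num) 18 (by norm_num [Finset.sum_range_succ]) (by rw [(abs_of_nonpos (by norm_num : (-5/16 : ℝ) ≤ (0:ℝ)))]; norm_num) (by norm_num) (by norm_num)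
  have hr1 := log_scale (42 : ℝ) (21/16 : ℝ) 5 (by norm_num) (by norm_num) (54386743021/200000000000 : ℝ) (135966857921/500000000000 : ℝ) (747533923321/200000000000 : ℝ) (1868834809921/500000000000 : ℝ) hm1.1 hm1.2 (by norm_num) (by norm_num)
  have hu1 : (5392317/1000000 : ℝ) ≤ Real.logb 2 (42 : ℝ) := logb_ge_of _ _ _ hr1.1 (by norm_num) (by norm_num)
  have hu2 : Real.logb 2 (42 : ℝ) ≤ (2696159/500000 : ℝ) := logb_le_of _ _ _ hr1.2 (by norm_num) (by norm_num)
  have hm2 := log_rat_bounds (7392317/8000000 : ℝ) (607683/8000000 : ℝ) (74222708037513985437912078726426379773613034082655664487/939524096000000000000000000000000000000000000000000000000 : ℝ) (23/250000000000 : ℝ) (-79000324143/1000000000000 : ℝ) (-39500161979/500000000000 : ℝ) (by norm_num) (by rw [(abs_of_nonneg (by norm_num : (0:ℝ) ≤ (607683/8000000 : ℝ)))]; norm_num) 8 (by norm_num [Finset.sum_range_succ]) (by rw [(abs_of_nonneg (by norm_num : (0:ℝ) ≤ (607683/8000000 : ℝ)))]; norm_num) (by norm_num) (by norm_num)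
  have hr2 := log_scale ((2:ℝ) + (5392317/1000000 : ℝ)) (7392317/8000000 : ℝ) 3 (by norm_num) (by norm_num) (-79000324143/1000000000000 : ℝ) (-39500161979/500000000000 : ℝ) (2000441216757/1000000000000 : ℝ) (1000220609221/500000000000 : ℝ) hm2.1 hm2.2 (by norm_num) (by norm_num)
  have hd1 : (1443013/500000 : ℝ) ≤ Real.logb 2 (2 + (5392317/1000000 : ℝ)) := logb_ge_of _ _ _ hr2.1 (by norm_num) (by norm_num)
  exact f_le_num _ _ _ _ _ (by norm_num) hu1 hu2 hd1 (by norm_num) (by norm_num)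

lemma fb_Y3002 : f (3002 : ℝ) ≤ (20423/25000 : ℝ) := by
  have hm1 := log_rat_bounds (1501/2048 : ℝ) (547/2048 : ℝ) (130921830167523580726924222539728243936912323606109429/421333384022851340483103893054111799170569480949465088 : ℝ) (229/250000000000 : ℝ) (-155366077693/500000000000 : ℝ) (-310732153553/1000000000000 : ℝ) (by norm_num) (by rw [(abs_of_nonneg (by norm_num : (0:ℝ) ≤ (547/2048 : ℝ)))]; norm_num) 15 (by norm_num [Finset.sum_range_succ]) (by rw [(abs_of_nonneg (by norm_num : (0:ℝ) ≤ (547/2048 : ℝ)))]; norm_num) (by norm_num) (by norm_num)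
  have hr1 := log_scale (3002 : ℝ) (1501/2048 : ℝ) 12 (by norm_num) (by norm_num) (-155366077693/500000000000 : ℝ) (-310732153553/1000000000000 : ℝ) (4003517004107/500000000000 : ℝ) (8007034016047/1000000000000 : ℝ) hm1.1 hm1.2 (by norm_num) (by norm_num)
  have hu1 : (2887927/250000 : ℝ) ≤ Real.logb 2 (3002 : ℝ) := logb_ge_of _ _ _ hr1.1 (by norm_num) (by norm_num)
  have hu2 : Real.logb 2 (3002 : ℝ) ≤ (11551709/1000000 : ℝ) := logb_le_of _ _ _ hr1.2 (by norm_num) (by norm_num)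
  have hm2 := log_rat_bounds (3387927/4000000 : ℝ) (612073/4000000 : ℝ) (6269164031868204057413000969235326501620093352015088199785154482510489763/37748736000000000000000000000000000000000000000000000000000000000000000000 : ℝ) (39/200000000000 : ℝ) (-166076131377/1000000000000 : ℝ) (-83038065493/500000000000 : ℝ) (by norm_num) (by rw [(abs_of_nonneg (by norm_num : (0:ℝ) ≤ (612073/4000000 : ℝ)))]; norm_num) 11 (by norm_num [Finset.sum_range_succ]) (by rw [(abs_of_nonneg (by norm_num : (0:ℝ) ≤ (612073/4000000 : ℝ)))]; norm_num) (by norm_num) (by norm_num)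
  have hr2 := log_scale ((2:ℝ) + (2887927/250000 : ℝ)) (3387927/4000000 : ℝ) 4 (by norm_num) (by norm_num) (-166076131377/1000000000000 : ℝ) (-83038065493/500000000000 : ℝ) (2606512589823/1000000000000 : ℝ) (1303256296107/500000000000 : ℝ) hm2.1 hm2.2 (by norm_num) (by norm_num)
  have hd1 : (1880201/500000 : ℝ) ≤ Real.logb 2 (2 + (2887927/250000 : ℝ)) := logb_ge_of _ _ _ hr2.1 (by norm_num) (by norm_num)
  exact f_le_num _ _ _ _ _ (by norm_num) hu1 hu2 hd1 (by norm_num) (by norm_num)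

lemma key (A B : ℝ) (hB1 : 1 ≤ B) (hBA : B ≤ A) (h3000 : A ≤ 3000*B) :
    f ((A+B+1)/A) + f ((A+B+1)/B) ≤ 0.95 := by
  have hA1 : 1 ≤ A := le_trans hB1 hBA
  have hA0 : 0 < A := by linarith
  have hB0 : 0 < B := by linarith
  have hx1 : 1 ≤ (A+B+1)/A := by rw [le_div_iff₀ hA0]; linarith
  have hy1 : 1 ≤ (A+B+1)/B := by rw [le_div_iff₀ hB0]; linarith
  by_cases hc5 : A+B+1 ≤ 1.05*A
  · -- x ≤ 1.05, y ≤ 3002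
    refine pair_le (21/20) 3002 _ _ hx1 hy1 ?_ ?_ fb_X105 fb_Y3002 (by norm_num)
    · rw [div_le_iff₀ hA0]; norm_num at hc5 ⊢; linarith
    · rw [div_le_iff₀ hB0]; linarith
  push_neg at hc5
  by_cases hc4 : A+B+1 ≤ 1.2*A
  · -- x ≤ 1.2, from 1.05A < A+B+1 : A < 20(B+1), so y ≤ 42
    refine pair_le (6/5) 42 _ _ hx1 hy1 ?_ ?_ fb_X12 fb_Y42 (by norm_num)
    · rw [div_le_iff₀ hA0]; norm_num at hc4 ⊢; linarith
    · rw [div_le_iff₀ hB0]; norm_num at hc5; linarith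
  push_neg at hc4
  by_cases hc3 : A+B+1 ≤ 1.5*A
  · -- x ≤ 1.5, from 1.2A < A+B+1 : A < 5(B+1), so y ≤ 12
    refine pair_le (3/2) 12 _ _ hx1 hy1 ?_ ?_ fb_X15 fb_Y12 (by norm_num)
    · rw [div_le_iff₀ hA0]; norm_num at hc3 ⊢; linarith
    · rw [div_le_iff₀ hB0]; norm_num at hc4; linarith
  push_neg at hc3
  by_cases hc2 : A+B+1 ≤ 2*A
  · -- x ≤ 2, from 1.5A < A+B+1 : A < 2(B+1), so y ≤ 6
    refine pair_le 2 6 _ _ hx1 hy1 ?_ ?_ fb_X2 fb_Y6 (by norm_num)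
    · rw [div_le_iff₀ hA0]; linarith
    · rw [div_le_iff₀ hB0]; norm_num at hc3; linarith
  push_neg at hc2
  by_cases hc1 : A+B+1 ≤ 2.6*A
  · -- x ≤ 2.6, from 2A < A+B+1 : A < B+1, so y ≤ 4
    refine pair_le (13/5) 4 _ _ hx1 hy1 ?_ ?_ fb_X26 fb_Y4 (by norm_num)
    · rw [div_le_iff₀ hA0]; norm_num at hc1 ⊢; linarith
    · rw [div_le_iff₀ hB0]; linarith
  push_neg at hc1
  · -- x ≤ 3 always, from 2.6A < A+B+1 : 1.6A < B+1, so y ≤ 3.25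
    refine pair_le 3 (13/4) _ _ hx1 hy1 ?_ ?_ fb_X3 fb_Y325 (by norm_num)
    · rw [div_le_iff₀ hA0]; linarith
    · rw [div_le_iff₀ hB0]; norm_num at hc1 ⊢; linarith

theorem stmt_14 (a b : ℕ) (ha : 0 < a) (hb : 0 < b)
    (h1 : 1 / (3000 : ℝ) ≤ (a : ℝ) / b) (h2 : (a : ℝ) / b ≤ 3000) :
    f (((a : ℝ) + b + 1) / a) + f (((a : ℝ) + b + 1) / b) ≤ 0.95 := by
  have ha0 : (0:ℝ) < a := by exact_mod_cast ha
  have hb0 : (0:ℝ) < b := by exact_mod_cast hb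
  have ha1 : (1:ℝ) ≤ a := by exact_mod_cast ha
  have hb1 : (1:ℝ) ≤ b := by exact_mod_cast hb
  rcases le_total b a with h | h
  · have hBA : (b:ℝ) ≤ a := by exact_mod_cast h
    have h3000 : (a:ℝ) ≤ 3000*b := by
      rw [div_le_iff₀ hb0] at h2; linarith
    exact key (a:ℝ) (b:ℝ) hb1 hBA h3000
  · have hBA : (a:ℝ) ≤ b := by exact_mod_cast h
    have h3000 : (b:ℝ) ≤ 3000*a := by
      rw [div_le_div_iff₀ (by norm_num) hb0] at h1; linarith
    have := key (b:ℝ) (a:ℝ) ha1 hBA h3000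
    have heq : ((b:ℝ)+a+1) = ((a:ℝ)+b+1) := by ring
    rw [heq] at this
    linarith
end

section
/- Let x ≥ γ² and y ≥ 1/γ with γ = 3000, and set H_A = log₂(1+x+1/y), H_B = log₂(1+xy). Then f(1+xy) − f(1+y) ≥ c₁·H_A/(log₂(2+H_B))² − c₂ for absolute constants c₁ > 0, c₂ ≥ 0, where f(x) = log₂(x)/(log₂(2+log₂ x))². -/
/-- Tangent-line inequality: `10(u-2) ≤ 4 u log u` for `u ≥ 2`. -/
lemma key_tangent (u : ℝ) (hu : 2 ≤ u) : 10 * u - 20 ≤ 4 * (u * Real.log u) := by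
  have h0 : (0:ℝ) < u := by linarith
  have he2 : Real.exp (3/2 : ℝ) ^ 2 = Real.exp 3 := by
    rw [sq, ← Real.exp_add]; norm_num
  have he3 : Real.exp (3:ℝ) < 25 := by
    have h1 := Real.exp_one_lt_d9
    have h3 : Real.exp (3:ℝ) = Real.exp 1 ^ 3 := by
      rw [Real.exp_one_pow]; norm_num
    rw [h3]
    calc Real.exp 1 ^ 3 < 2.7182818286 ^ 3 :=
          pow_lt_pow_left₀ h1 (Real.exp_pos 1).le (by norm_num)
      _ < 25 := by norm_num
  have he : Real.exp (3/2 : ℝ) ≤ 5 := by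
    nlinarith [Real.exp_pos (3/2 : ℝ)]
  have h1 : Real.log (Real.exp (3/2 : ℝ) / u) ≤ Real.exp (3/2 : ℝ) / u - 1 :=
    Real.log_le_sub_one_of_pos (by positivity)
  rw [Real.log_div (Real.exp_ne_zero _) (ne_of_gt h0), Real.log_exp] at h1
  have h2 : (3/2 - Real.log u) * u ≤ (Real.exp (3/2 : ℝ) / u - 1) * u :=
    mul_le_mul_of_nonneg_right h1 h0.le
  have h4 : (Real.exp (3/2 : ℝ) / u - 1) * u = Real.exp (3/2 : ℝ) - u := by
    field_simp
  rw [h4] at h2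
  nlinarith [h2, he]

/-- Derivative of `G t = t / (logb 2 (2+t))^2`. -/
lemma hasDeriv_G (t : ℝ) (ht : 0 ≤ t) :
    HasDerivAt (fun s => s / (Real.logb 2 (2+s))^2)
      (((2+t) * Real.log (2+t) - 2*t) * (Real.log 2)^2 / ((2+t) * (Real.log (2+t))^3)) t := by
  have h2t : (0:ℝ) < 2 + t := by linarith
  have hlog : 0 < Real.log (2+t) := Real.log_pos (by linarith)
  have hlog2 : 0 < Real.log 2 := Real.log_pos one_lt_two
  have hLpos : 0 < Real.logb 2 (2+t) := Real.logb_pos one_lt_two (by linarith)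
  have h1 : HasDerivAt (fun s : ℝ => 2 + s) 1 t := (hasDerivAt_id t).const_add 2
  have h2 : HasDerivAt (fun s : ℝ => Real.log (2+s)) ((2+t)⁻¹ * 1) t :=
    (Real.hasDerivAt_log (ne_of_gt h2t)).comp t h1
  have h3 : HasDerivAt (fun s : ℝ => Real.logb 2 (2+s)) ((2+t)⁻¹ * 1 / Real.log 2) t := by
    simpa [Real.logb] using h2.div_const (Real.log 2)
  have h4 : HasDerivAt (fun s : ℝ => (Real.logb 2 (2+s))^2)
      ((2:ℕ) * Real.logb 2 (2+t) ^ 1 * ((2+t)⁻¹ * 1 / Real.log 2)) t := h3.pow 2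
  have h5 : HasDerivAt (fun s => s / (Real.logb 2 (2+s))^2)
      ((1 * (Real.logb 2 (2+t))^2 -
        t * ((2:ℕ) * Real.logb 2 (2+t) ^ 1 * ((2+t)⁻¹ * 1 / Real.log 2))) /
        ((Real.logb 2 (2+t))^2)^2) t :=
    (hasDerivAt_id t).div h4 (by positivity)
  convert h5 using 1
  simp only [Real.logb]
  field_simp
  ring

/-- Lower bound on the derivative of `G`. -/
lemma deriv_G_lb (t : ℝ) (ht : 0 ≤ t) :
    1 / (5 * (Real.logb 2 (2+t))^2) ≤
      ((2+t) * Real.log (2+t) - 2*t) * (Real.log 2)^2 / ((2+t) * (Real.log (2+t))^3) := by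
  have h2t : (0:ℝ) < 2 + t := by linarith
  have hlog : 0 < Real.log (2+t) := Real.log_pos (by linarith)
  have hlog2 : 0 < Real.log 2 := Real.log_pos one_lt_two
  have hkey := key_tangent (2+t) (by linarith)
  have h5 : (1/5 : ℝ) * ((2+t) * Real.log (2+t)) ≤ (2+t) * Real.log (2+t) - 2*t := by
    nlinarith [hkey]
  have hden : (0:ℝ) < (2+t) * (Real.log (2+t))^3 := by
    exact mul_pos h2t (pow_pos hlog 3)
  calc 1 / (5 * (Real.logb 2 (2+t))^2)
      = ((1/5) * ((2+t) * Real.log (2+t))) * (Real.log 2)^2 / ((2+t) * (Real.log (2+t))^3) := by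
        simp only [Real.logb, div_pow]
        field_simp
    _ ≤ ((2+t) * Real.log (2+t) - 2*t) * (Real.log 2)^2 / ((2+t) * (Real.log (2+t))^3) := by
        apply (div_le_div_iff_of_pos_right hden).mpr
        exact mul_le_mul_of_nonneg_right h5 (sq_nonneg _)

/-- Quantitative gain for `G`. -/
lemma G_gain (s₁ s₂ : ℝ) (h0 : 0 ≤ s₁) (h12 : s₁ ≤ s₂) :
    (s₂ - s₁) / (5 * (Real.logb 2 (2 + s₂))^2) ≤
      s₂ / (Real.logb 2 (2 + s₂))^2 - s₁ / (Real.logb 2 (2 + s₁))^2 := by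
  set C : ℝ := 1 / (5 * (Real.logb 2 (2 + s₂))^2) with hC
  have hL2pos : 0 < Real.logb 2 (2 + s₂) := Real.logb_pos one_lt_two (by linarith)
  have hd : ∀ t ∈ Set.Icc s₁ s₂,
      HasDerivAt (fun s => s / (Real.logb 2 (2+s))^2 - C * s)
        ((((2+t) * Real.log (2+t) - 2*t) * (Real.log 2)^2 / ((2+t) * (Real.log (2+t))^3)) - C * 1) t := by
    intro t htm
    exact (hasDeriv_G t (le_trans h0 htm.1)).sub ((hasDerivAt_id t).const_mul C)
  have hmono : MonotoneOn (fun s => s / (Real.logb 2 (2+s))^2 - C * s) (Set.Icc s₁ s₂) := by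
    apply monotoneOn_of_deriv_nonneg (convex_Icc _ _)
    · exact fun t htm => ((hd t htm).continuousAt).continuousWithinAt
    · intro t htm
      rw [interior_Icc] at htm
      exact ((hd t ⟨htm.1.le, htm.2.le⟩).differentiableAt).differentiableWithinAt
    · intro t htm
      rw [interior_Icc] at htm
      have htm' : t ∈ Set.Icc s₁ s₂ := ⟨htm.1.le, htm.2.le⟩
      rw [(hd t htm').deriv]
      have ht0 : 0 ≤ t := le_trans h0 htm'.1
      have hLt : 0 < Real.logb 2 (2+t) := Real.logb_pos one_lt_two (by linarith)
      have hle : Real.logb 2 (2+t) ≤ Real.logb 2 (2+s₂) :=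
        (Real.logb_le_logb one_lt_two (by linarith) (by linarith)).mpr (by linarith [htm.2])
      have hCle : C ≤ 1 / (5 * (Real.logb 2 (2+t))^2) := by
        rw [hC]
        exact one_div_le_one_div_of_le (by positivity) (by nlinarith [hLt, hle])
      have := deriv_G_lb t ht0
      simp only [mul_one]
      linarith
  have h := hmono (Set.left_mem_Icc.mpr h12) (Set.right_mem_Icc.mpr h12) h12
  simp only at h
  have : (s₂ - s₁) / (5 * (Real.logb 2 (2 + s₂))^2) = C * s₂ - C * s₁ := by
    rw [hC]; ring
  linarith

theorem stmt_19 : ∃ c₁ c₂ : ℝ, 0 < c₁ ∧ 0 ≤ c₂ ∧ ∀ x y : ℝ,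
    (3000 : ℝ) ^ 2 ≤ x → 1 / (3000 : ℝ) ≤ y →
    f (1 + x * y) - f (1 + y) ≥
      c₁ * Real.logb 2 (1 + x + 1 / y) /
        (Real.logb 2 (2 + Real.logb 2 (1 + x * y))) ^ 2 - c₂ := by
  refine ⟨1/15, 0, by norm_num, le_refl 0, fun x y hx hy => ?_⟩
  have hx9 : (9000000 : ℝ) ≤ x := by norm_num at hx; linarith
  have hy0 : (0:ℝ) < y := lt_of_lt_of_le (by norm_num) hy
  have hxy0 : 0 < x * y := mul_pos (by linarith) hy0
  have hiy : 1 / y ≤ 3000 := by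
    rw [div_le_iff₀ hy0]; nlinarith
  have hiy0 : 0 < 1 / y := by positivity
  have hyx : y ≤ x * y := by nlinarith
  set s₁ := Real.logb 2 (1 + y) with hs₁
  set s₂ := Real.logb 2 (1 + x * y) with hs₂
  have h1y : (1:ℝ) < 1 + y := by linarith
  have h1xy : (1:ℝ) < 1 + x * y := by linarith
  have hs₁0 : 0 ≤ s₁ := Real.logb_nonneg one_lt_two h1y.le
  have hs₁₂ : s₁ ≤ s₂ :=
    (Real.logb_le_logb one_lt_two (by linarith) (by linarith)).mpr (by linarith)
  have hgain := G_gain s₁ s₂ hs₁0 hs₁₂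
  -- ratio bound : 1 + x + 1/y ≤ ((1+x*y)/(1+y))^3
  have hr1 : x / 6000 ≤ (1 + x * y) / (1 + y) := by
    rw [div_le_div_iff₀ (by norm_num) (by linarith)]
    nlinarith [mul_le_mul_of_nonneg_left hy (by linarith : (0:ℝ) ≤ x)]
  have hx60 : (0:ℝ) ≤ x / 6000 := by positivity
  have hup : 1 + x + 1 / y ≤ ((1 + x * y) / (1 + y))^3 := by
    have h2x : 1 + x + 1 / y ≤ 2 * x := by linarith
    have hx3 : 2 * x ≤ (x / 6000)^3 := by
      rw [div_pow]
      rw [le_div_iff₀ (by norm_num)]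
      nlinarith [sq_nonneg x, hx9]
    calc 1 + x + 1 / y ≤ (x / 6000)^3 := by linarith
      _ ≤ ((1 + x * y) / (1 + y))^3 := pow_le_pow_left₀ hx60 hr1 3
  have hrpos : (0:ℝ) < (1 + x * y) / (1 + y) := by positivity
  have hHA : Real.logb 2 (1 + x + 1 / y) ≤ 3 * (s₂ - s₁) := by
    calc Real.logb 2 (1 + x + 1 / y)
        ≤ Real.logb 2 (((1 + x * y) / (1 + y))^3) :=
          (Real.logb_le_logb one_lt_two (by linarith) (by positivity)).mpr hup
      _ = 3 * Real.logb 2 ((1 + x * y) / (1 + y)) := by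
          rw [Real.logb_pow]; norm_num
      _ = 3 * (s₂ - s₁) := by
          rw [Real.logb_div (by linarith) (by linarith)]
  have hHA0 : 0 ≤ Real.logb 2 (1 + x + 1 / y) :=
    Real.logb_nonneg one_lt_two (by linarith)
  have hs₂0 : 0 ≤ s₂ := le_trans hs₁0 hs₁₂
  have hL₂ : (1:ℝ) ≤ Real.logb 2 (2 + s₂) := by
    have h := (Real.logb_le_logb one_lt_two (by norm_num) (by linarith)).mpr
      (by linarith : (2:ℝ) ≤ 2 + s₂)
    rwa [Real.logb_self_eq_one one_lt_two] at h
  have hL₂0 : (0:ℝ) < (Real.logb 2 (2 + s₂))^2 := by positivity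
  have hchain : (1/15) * Real.logb 2 (1 + x + 1 / y) / (Real.logb 2 (2 + s₂))^2 ≤
      (s₂ - s₁) / (5 * (Real.logb 2 (2 + s₂))^2) := by
    rw [div_le_div_iff₀ hL₂0 (by positivity)]
    nlinarith [hHA, hL₂0]
  have hf1 : f (1 + x * y) = s₂ / (Real.logb 2 (2 + s₂))^2 := rfl
  have hf2 : f (1 + y) = s₁ / (Real.logb 2 (2 + s₁))^2 := rfl
  rw [ge_iff_le, sub_zero, hf1, hf2]
  linarith
end
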